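/- arXiv:1407.5165 — 6 statements merged into one kernel-verified Lean document; each statement's English description precedes it below -/
import Mathlib

section
/- For every integer n ≥ 1, the multiple zeta value ζ(2,2,...,2) with n twos equals π^{2n}/(2n+1)!. -/
open Filter Finset Topology

namespace ZetaTwoRep

noncomputable def a (k : ℕ) : ℝ := 1 / ((k : ℝ) + 1) ^ 2

lemma a_nonneg (k : ℕ) : 0 ≤ a k := by unfold a; positivity

lemma summable_a : Summable a := by
  have h : Summable (fun n : ℕ => 1 / (n : ℝ) ^ 2) :=
    Real.summable_one_div_nat_pow.mpr (by norm_num)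
  have h2 := (summable_nat_add_iff 1).mpr h
  apply h2.congr
  intro n
  unfold a
  push_cast
  ring_nf

noncomputable def g (x : ℝ) (S : Finset ℕ) : ℝ := x ^ S.card * ∏ k ∈ S, a k

lemma g_nonneg {x : ℝ} (hx : 0 ≤ x) (S : Finset ℕ) : 0 ≤ g x S :=
  mul_nonneg (pow_nonneg hx _) (Finset.prod_nonneg fun k _ => a_nonneg k)

lemma prod_expand (x : ℝ) (m : ℕ) :
    ∏ k ∈ range m, (x * a k + 1) = ∑ S ∈ (range m).powerset, g x S := by
  rw [Finset.prod_add]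
  refine Finset.sum_congr rfl fun S _ => ?_
  simp only [Finset.prod_const_one, mul_one, g, Finset.prod_mul_distrib,
    Finset.prod_const]

lemma prod_le {x : ℝ} (hx : 0 ≤ x) (m : ℕ) :
    ∏ k ∈ range m, (x * a k + 1) ≤ Real.exp (x * ∑' k, a k) := by
  calc ∏ k ∈ range m, (x * a k + 1)
      ≤ ∏ k ∈ range m, Real.exp (x * a k) := by
        refine Finset.prod_le_prod (fun k _ => ?_) (fun k _ => ?_)
        · have := mul_nonneg hx (a_nonneg k); linarith
        · have := Real.add_one_le_exp (x * a k); linarith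
    _ = Real.exp (∑ k ∈ range m, x * a k) := (Real.exp_sum _ _).symm
    _ ≤ Real.exp (x * ∑' k, a k) := by
        apply Real.exp_le_exp.mpr
        rw [← Finset.mul_sum]
        exact mul_le_mul_of_nonneg_left
          (Summable.sum_le_tsum _ (fun k _ => a_nonneg k) summable_a) hx

lemma summable_g {x : ℝ} (hx : 0 ≤ x) : Summable (g x) := by
  apply summable_of_sum_le (fun S => g_nonneg hx S)
  intro u
  set m := (u.sup id).sup id + 1 with hm
  have hsub : u ⊆ (range m).powerset := by
    intro S hS
    rw [Finset.mem_powerset]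
    intro k hk
    have h1 : S ⊆ u.sup id := Finset.le_sup (f := id) hS
    have h2 : k ≤ (u.sup id).sup id := Finset.le_sup (f := id) (h1 hk)
    exact Finset.mem_range.2 (Nat.lt_succ_of_le h2)
  calc ∑ S ∈ u, g x S ≤ ∑ S ∈ (range m).powerset, g x S :=
        Finset.sum_le_sum_of_subset_of_nonneg hsub (fun S _ _ => g_nonneg hx S)
    _ = ∏ k ∈ range m, (x * a k + 1) := (prod_expand x m).symm
    _ ≤ Real.exp (x * ∑' k, a k) := prod_le hx m

lemma tendsto_powerset_sum {x : ℝ} (hx : 0 ≤ x) :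
    Tendsto (fun m => ∑ S ∈ (range m).powerset, g x S) atTop (𝓝 (∑' S, g x S)) := by
  have h1 : Tendsto (fun m : ℕ => (range m).powerset) atTop atTop := by
    apply tendsto_atTop_finset_of_monotone
    · intro i j hij
      exact Finset.powerset_mono.mpr (Finset.range_subset_range.mpr hij)
    · intro S
      exact ⟨S.sup id + 1, Finset.mem_powerset.mpr
        (fun k hk => Finset.mem_range.2 (Nat.lt_succ_of_le (Finset.le_sup (f := id) hk)))⟩
  exact ((summable_g hx).hasSum).comp h1

lemma tendsto_prod_sinh {x : ℝ} (hx : 0 < x) :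
    Tendsto (fun m => ∏ k ∈ range m, (x * a k + 1)) atTop
      (𝓝 (Real.sinh (Real.pi * Real.sqrt x) / (Real.pi * Real.sqrt x))) := by
  set t := Real.sqrt x with ht
  have htpos : 0 < t := Real.sqrt_pos.2 hx
  have ht2 : (t : ℝ) ^ 2 = x := Real.sq_sqrt hx.le
  have h := Complex.tendsto_euler_sin_prod ((t : ℂ) * Complex.I)
  have hne : (Real.pi : ℂ) * ((t : ℂ) * Complex.I) ≠ 0 := by
    simp [Complex.I_ne_zero, Real.pi_ne_zero, htpos.ne']
  have h2 := h.div_const ((Real.pi : ℂ) * ((t : ℂ) * Complex.I))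
  have h3 : Tendsto (fun m : ℕ => (∏ j ∈ range m,
      ((1 : ℂ) - ((t : ℂ) * Complex.I) ^ 2 / ((j : ℂ) + 1) ^ 2))) atTop
      (𝓝 (Complex.sin (Real.pi * ((t : ℂ) * Complex.I)) /
        ((Real.pi : ℂ) * ((t : ℂ) * Complex.I)))) := by
    apply h2.congr
    intro m
    exact mul_div_cancel_left₀ _ hne
  have hterm : ∀ j : ℕ, ((1 : ℂ) - ((t : ℂ) * Complex.I) ^ 2 / ((j : ℂ) + 1) ^ 2)
      = ((x * a j + 1 : ℝ) : ℂ) := by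
    intro j
    have : ((t : ℂ) * Complex.I) ^ 2 = -(x : ℂ) := by
      rw [mul_pow, Complex.I_sq]
      push_cast [← ht2]
      ring
    rw [this]
    unfold a
    push_cast
    have hj : ((j : ℂ) + 1) ≠ 0 := Nat.cast_add_one_ne_zero j
    field_simp
    ring
  have hlim : Complex.sin (Real.pi * ((t : ℂ) * Complex.I)) /
      ((Real.pi : ℂ) * ((t : ℂ) * Complex.I))
      = ((Real.sinh (Real.pi * t) / (Real.pi * t) : ℝ) : ℂ) := by
    have : (Real.pi : ℂ) * ((t : ℂ) * Complex.I) = ((Real.pi * t : ℝ) : ℂ) * Complex.I := by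
      push_cast; ring
    rw [this, Complex.sin_mul_I, ← Complex.ofReal_sinh]
    rw [mul_div_mul_right _ _ Complex.I_ne_zero]
    push_cast
    ring
  rw [hlim] at h3
  have h4 : Tendsto (fun m : ℕ => ((∏ k ∈ range m, (x * a k + 1) : ℝ) : ℂ)) atTop
      (𝓝 ((Real.sinh (Real.pi * t) / (Real.pi * t) : ℝ) : ℂ)) := by
    apply h3.congr
    intro m
    rw [Complex.ofReal_prod]
    exact Finset.prod_congr rfl fun j _ => hterm j
  have h5 := (Complex.continuous_re.tendsto _).comp h4
  simp only [Function.comp_def, Complex.ofReal_re] at h5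
  exact h5

noncomputable def e (n : ℕ) : ℝ := ∑' S : {S : Finset ℕ // S.card = n}, ∏ k ∈ S.1, a k

def sigmaEquiv : (Σ n : ℕ, {S : Finset ℕ // S.card = n}) ≃ Finset ℕ where
  toFun p := p.2.1
  invFun S := ⟨S.card, S, rfl⟩
  left_inv := by rintro ⟨n, S, rfl⟩; rfl
  right_inv S := rfl

lemma summable_g_sigma {x : ℝ} (hx : 0 ≤ x) :
    Summable (fun p : Σ n : ℕ, {S : Finset ℕ // S.card = n} => g x (sigmaEquiv p)) :=
  (summable_g hx).comp_injective sigmaEquiv.injective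

lemma inner_tsum {x : ℝ} (n : ℕ) :
    ∑' S : {S : Finset ℕ // S.card = n}, g x S.1 = x ^ n * e n := by
  unfold e
  rw [← tsum_mul_left]
  exact tsum_congr fun S => by unfold g; rw [S.2]

lemma tsum_g_eq {x : ℝ} (hx : 0 ≤ x) : ∑' S : Finset ℕ, g x S = ∑' n, x ^ n * e n := by
  rw [← sigmaEquiv.tsum_eq (g x)]
  rw [Summable.tsum_sigma (summable_g_sigma hx)]
  exact tsum_congr fun n => inner_tsum n

lemma summable_xe {x : ℝ} (hx : 0 ≤ x) : Summable (fun n => x ^ n * e n) := by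
  have := (summable_g_sigma hx).sigma
  apply this.congr
  intro n
  exact inner_tsum n

lemma e_nonneg (n : ℕ) : 0 ≤ e n :=
  tsum_nonneg fun S => Finset.prod_nonneg fun k _ => a_nonneg k

lemma summable_e : Summable e := by
  have := summable_xe (zero_le_one (α := ℝ))
  simpa using this

noncomputable def c (n : ℕ) : ℝ := Real.pi ^ (2 * n) / (Nat.factorial (2 * n + 1) : ℝ)

lemma c_nonneg (n : ℕ) : 0 ≤ c n := by unfold c; positivity

lemma hasSum_sinh (r : ℝ) :
    HasSum (fun n : ℕ => r ^ (2 * n + 1) / (Nat.factorial (2 * n + 1) : ℝ)) (Real.sinh r) := by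
  have h := Complex.hasSum_sin ((r : ℂ) * Complex.I)
  rw [Complex.sin_mul_I, ← Complex.ofReal_sinh] at h
  have h2 : ∀ n : ℕ, (-1 : ℂ) ^ n * ((r : ℂ) * Complex.I) ^ (2 * n + 1) / (Nat.factorial (2 * n + 1) : ℂ)
      = ((r ^ (2 * n + 1) / (Nat.factorial (2 * n + 1) : ℝ) : ℝ) : ℂ) * Complex.I := by
    intro n
    have hI : ((r : ℂ) * Complex.I) ^ (2 * n + 1)
        = (r : ℂ) ^ (2 * n + 1) * ((-1 : ℂ) ^ n * Complex.I) := by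
      rw [mul_pow, pow_succ Complex.I, pow_mul Complex.I, Complex.I_sq]
    have hs : ((-1 : ℂ) ^ n) * ((-1 : ℂ) ^ n) = 1 := by
      rw [← pow_add, ← two_mul, pow_mul]; norm_num
    rw [hI]
    push_cast
    rw [show (-1 : ℂ) ^ n * ((r : ℂ) ^ (2 * n + 1) * ((-1 : ℂ) ^ n * Complex.I))
        = ((-1 : ℂ) ^ n * (-1 : ℂ) ^ n) * ((r : ℂ) ^ (2 * n + 1) * Complex.I) from by ring]
    rw [hs]
    ring
  simp_rw [h2] at h
  have h4 := h.div_const Complex.I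
  simp only [mul_div_cancel_right₀ _ Complex.I_ne_zero] at h4
  exact_mod_cast h4

lemma hasSum_c {x : ℝ} (hx : 0 < x) :
    HasSum (fun n => c n * x ^ n)
      (Real.sinh (Real.pi * Real.sqrt x) / (Real.pi * Real.sqrt x)) := by
  set t := Real.sqrt x with ht
  have htpos : 0 < t := Real.sqrt_pos.2 hx
  have ht2 : t ^ 2 = x := Real.sq_sqrt hx.le
  have hne : Real.pi * t ≠ 0 := by positivity
  have h := (hasSum_sinh (Real.pi * t)).div_const (Real.pi * t)
  have key : ∀ n : ℕ, (Real.pi * t) ^ (2 * n + 1) / (Nat.factorial (2 * n + 1) : ℝ) / (Real.pi * t)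
      = c n * x ^ n := by
    intro n
    have h1 : (Real.pi * t) ^ (2 * n + 1) / (Real.pi * t) = (Real.pi * t) ^ (2 * n) := by
      rw [pow_succ]
      field_simp
    rw [div_right_comm, h1]
    unfold c
    rw [mul_pow, pow_mul t, ht2]
    ring
  rw [show (fun n : ℕ => (Real.pi * t) ^ (2 * n + 1) / (Nat.factorial (2 * n + 1) : ℝ) / (Real.pi * t))
      = fun n => c n * x ^ n from funext key] at h
  exact h

lemma summable_c : Summable c := by
  have h := (hasSum_c (x := 1) one_pos).summable
  simpa using h

lemma main_identity {x : ℝ} (hx0 : 0 < x) (hx1 : x < 1) :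
    ∑' n, e n * x ^ n = ∑' n, c n * x ^ n := by
  have hA := tendsto_powerset_sum hx0.le
  have hB := (tendsto_prod_sinh hx0).congr (fun m => prod_expand x m)
  have h1 := tendsto_nhds_unique hB hA
  rw [tsum_g_eq hx0.le] at h1
  calc ∑' n, e n * x ^ n = ∑' n, x ^ n * e n := tsum_congr fun n => mul_comm _ _
    _ = Real.sinh (Real.pi * Real.sqrt x) / (Real.pi * Real.sqrt x) := h1.symm
    _ = ∑' n, c n * x ^ n := (hasSum_c hx0).tsum_eq.symm

lemma coeff_eq {u v : ℕ → ℝ} (hu0 : ∀ n, 0 ≤ u n) (hv0 : ∀ n, 0 ≤ v n)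
    (hus : Summable u) (hvs : Summable v)
    (h : ∀ x : ℝ, 0 < x → x < 1 → ∑' n, u n * x ^ n = ∑' n, v n * x ^ n) :
    ∀ m, u m = v m := by
  have tail_sum : ∀ (w : ℕ → ℝ), (∀ n, 0 ≤ w n) → Summable w → ∀ (k : ℕ) (x : ℝ),
      0 ≤ x → x ≤ 1 → Summable (fun i => w (i + k) * x ^ i) := by
    intro w hw0 hws k x hx0 hx1
    have hk : Summable (fun i => w (i + k)) := (summable_nat_add_iff k).2 hws
    refine Summable.of_nonneg_of_le (fun i => mul_nonneg (hw0 _) (pow_nonneg hx0 _))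
      (fun i => ?_) hk
    exact mul_le_of_le_one_right (hw0 _) (pow_le_one₀ hx0 hx1)
  have tail_bound : ∀ (w : ℕ → ℝ), (∀ n, 0 ≤ w n) → Summable w → ∀ (k : ℕ) (x : ℝ),
      0 < x → x < 1 → |(∑' i, w (i + k) * x ^ i) - w k| ≤ (∑' n, w n) * x := by
    intro w hw0 hws k x hx0 hx1
    have h1 := Summable.tsum_eq_zero_add (tail_sum w hw0 hws k x hx0.le hx1.le)
    have h2 : ∑' i, w (i + 1 + k) * x ^ (i + 1) = (∑' i, w (i + (k + 1)) * x ^ i) * x := by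
      rw [← tsum_mul_right]
      exact tsum_congr fun i => by
        rw [pow_succ, show i + 1 + k = i + (k + 1) from by omega]; ring
    rw [h1, h2]
    have hT0 : 0 ≤ ∑' i, w (i + (k + 1)) * x ^ i :=
      tsum_nonneg fun i => mul_nonneg (hw0 _) (pow_nonneg hx0.le _)
    have hTC : (∑' i, w (i + (k + 1)) * x ^ i) ≤ ∑' n, w n := by
      apply Summable.tsum_le_tsum_of_inj (fun i => i + (k + 1)) (fun i j hij => by simpa using hij)
        (fun c _ => hw0 c)
        (fun i => mul_le_of_le_one_right (hw0 _) (pow_le_one₀ hx0.le hx1.le))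
        (tail_sum w hw0 hws (k + 1) x hx0.le hx1.le) hws
    simp only [Nat.zero_add, pow_zero, mul_one, add_sub_cancel_left]
    rw [abs_of_nonneg (mul_nonneg hT0 hx0.le)]
    exact mul_le_mul_of_nonneg_right hTC hx0.le
  intro m
  induction m using Nat.strong_induction_on with
  | _ m ih =>
  have key : ∀ x : ℝ, 0 < x → x < 1 →
      (∑' i, u (i + m) * x ^ i) = ∑' i, v (i + m) * x ^ i := by
    intro x hx0 hx1
    have hsumux : Summable (fun n => u n * x ^ n) := by
      simpa using tail_sum u hu0 hus 0 x hx0.le hx1.le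
    have hsumvx : Summable (fun n => v n * x ^ n) := by
      simpa using tail_sum v hv0 hvs 0 x hx0.le hx1.le
    have h2 := Summable.sum_add_tsum_nat_add m hsumux
    have h3 := Summable.sum_add_tsum_nat_add m hsumvx
    have hheads : ∑ i ∈ range m, u i * x ^ i = ∑ i ∈ range m, v i * x ^ i :=
      Finset.sum_congr rfl fun i hi => by rw [ih i (Finset.mem_range.1 hi)]
    have hx := h x hx0 hx1
    have htails : ∑' i, u (i + m) * x ^ (i + m) = ∑' i, v (i + m) * x ^ (i + m) := by
      linarith
    have hu4 : ∑' i, u (i + m) * x ^ (i + m) = (∑' i, u (i + m) * x ^ i) * x ^ m := by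
      rw [← tsum_mul_right]
      exact tsum_congr fun i => by rw [pow_add]; ring
    have hv4 : ∑' i, v (i + m) * x ^ (i + m) = (∑' i, v (i + m) * x ^ i) * x ^ m := by
      rw [← tsum_mul_right]
      exact tsum_congr fun i => by rw [pow_add]; ring
    rw [hu4, hv4] at htails
    exact mul_right_cancel₀ (pow_ne_zero m hx0.ne') htails
  set Cu := ∑' n, u n with hCudef
  set Cv := ∑' n, v n with hCvdef
  have hCu : 0 ≤ Cu := tsum_nonneg hu0
  have hCv : 0 ≤ Cv := tsum_nonneg hv0
  have hbound : ∀ x : ℝ, 0 < x → x < 1 → |u m - v m| ≤ (Cu + Cv) * x := by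
    intro x hx0 hx1
    have b1 := tail_bound u hu0 hus m x hx0 hx1
    have b2 := tail_bound v hv0 hvs m x hx0 hx1
    have hsplit : u m - v m = (u m - (∑' i, u (i + m) * x ^ i))
        + ((∑' i, v (i + m) * x ^ i) - v m) := by
      rw [key x hx0 hx1]; ring
    rw [hsplit]
    calc |(u m - (∑' i, u (i + m) * x ^ i)) + ((∑' i, v (i + m) * x ^ i) - v m)|
        ≤ |u m - (∑' i, u (i + m) * x ^ i)| + |(∑' i, v (i + m) * x ^ i) - v m| :=
          abs_add_le _ _
      _ ≤ Cu * x + Cv * x := add_le_add (by rw [abs_sub_comm]; exact b1) b2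
      _ = (Cu + Cv) * x := by ring
  by_contra hne
  have hd : 0 < |u m - v m| := abs_pos.2 (sub_ne_zero.2 hne)
  set d := |u m - v m| with hddef
  set x := min (1 / 2 : ℝ) (d / (2 * (Cu + Cv + 1))) with hxdef
  have hx0 : 0 < x := lt_min (by norm_num) (by positivity)
  have hx1 : x < 1 := lt_of_le_of_lt (min_le_left _ _) (by norm_num)
  have hb := hbound x hx0 hx1
  have hxle : x ≤ d / (2 * (Cu + Cv + 1)) := min_le_right _ _
  have hmono : (Cu + Cv) * x ≤ (Cu + Cv) * (d / (2 * (Cu + Cv + 1))) :=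
    mul_le_mul_of_nonneg_left hxle (by linarith)
  have hD : (0 : ℝ) < 2 * (Cu + Cv + 1) := by linarith
  have hlt : (Cu + Cv) * (d / (2 * (Cu + Cv + 1))) < d := by
    rw [mul_div_assoc', div_lt_iff₀ hD]
    nlinarith
  linarith

lemma e_eq_c (n : ℕ) : e n = c n :=
  coeff_eq e_nonneg c_nonneg summable_e summable_c
    (fun x hx0 hx1 => main_identity hx0 hx1) n

def tupleEquiv (n : ℕ) :
    {S : Finset ℕ // S.card = n} ≃ {f : Fin n → ℕ // StrictMono f ∧ ∀ i, 1 ≤ f i} where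
  toFun S := ⟨fun i => S.1.orderEmbOfFin S.2 i + 1,
    fun i j hij => Nat.add_lt_add_right ((S.1.orderEmbOfFin S.2).strictMono hij) 1,
    fun i => Nat.le_add_left 1 _⟩
  invFun f := ⟨Finset.image (fun i => f.1 i - 1) Finset.univ, by
    rw [Finset.card_image_of_injective _ (fun i j hij => by
      have h1 := f.2.2 i
      have h2 := f.2.2 j
      have := f.2.1.injective (a₁ := i) (a₂ := j)
      exact this (by omega)), Finset.card_univ, Fintype.card_fin]⟩
  left_inv S := by
    apply Subtype.ext
    have hsimp : (fun i => S.1.orderEmbOfFin S.2 i + 1 - 1) = fun i => S.1.orderEmbOfFin S.2 i :=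
      funext fun i => by omega
    show Finset.image (fun i => S.1.orderEmbOfFin S.2 i + 1 - 1) Finset.univ = S.1
    rw [hsimp, ← Finset.coe_inj, Finset.coe_image, Finset.coe_univ, Set.image_univ]
    exact Finset.range_orderEmbOfFin S.1 S.2
  right_inv f := by
    apply Subtype.ext
    funext i
    have hmono : StrictMono (fun i => f.1 i - 1) := by
      intro i j hij
      have h1 := f.2.2 i
      have := f.2.1 hij
      simp only
      omega
    have hmem : ∀ i, (fun i => f.1 i - 1) i ∈ Finset.image (fun i => f.1 i - 1) Finset.univ :=
      fun i => Finset.mem_image_of_mem _ (Finset.mem_univ i)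
    have hu := Finset.orderEmbOfFin_unique
      (s := Finset.image (fun i => f.1 i - 1) Finset.univ)
      (f := fun i => f.1 i - 1)
      (by rw [Finset.card_image_of_injective _ hmono.injective, Finset.card_univ,
        Fintype.card_fin]) hmem hmono
    show (Finset.image (fun i => f.1 i - 1) Finset.univ).orderEmbOfFin _ i + 1 = f.1 i
    rw [← congrFun hu i]
    have := f.2.2 i
    omega

lemma zeta_eq_e (n : ℕ) :
    ∑' k : {f : Fin n → ℕ // StrictMono f ∧ ∀ i, 1 ≤ f i},
      ∏ i, (1 : ℝ) / ((k.1 i : ℝ)) ^ 2 = e n := by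
  rw [← (tupleEquiv n).tsum_eq (fun k : {f : Fin n → ℕ // StrictMono f ∧ ∀ i, 1 ≤ f i} =>
    ∏ i, (1 : ℝ) / ((k.1 i : ℝ)) ^ 2)]
  unfold e
  apply tsum_congr
  intro S
  show ∏ i : Fin n, (1 : ℝ) / (((S.1.orderEmbOfFin S.2 i + 1 : ℕ) : ℝ)) ^ 2 = ∏ k ∈ S.1, a k
  have himg : S.1 = Finset.image (fun i => S.1.orderEmbOfFin S.2 i) Finset.univ := by
    rw [← Finset.coe_inj, Finset.coe_image, Finset.coe_univ, Set.image_univ]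
    exact (Finset.range_orderEmbOfFin S.1 S.2).symm
  rw [show (∏ k ∈ S.1, a k) = ∏ i : Fin n, a (S.1.orderEmbOfFin S.2 i) from by
    conv_lhs => rw [himg]
    exact Finset.prod_image (fun i _ j _ hij => (S.1.orderEmbOfFin S.2).injective hij)]
  apply Finset.prod_congr rfl
  intro i _
  unfold a
  push_cast
  ring

end ZetaTwoRep


/-- For every integer `n ≥ 1`, the multiple zeta value `ζ(2,2,...,2)` with `n` twos,
defined as the sum over strictly increasing tuples `1 ≤ k₁ < ... < kₙ` of
`1/(k₁² ⋯ kₙ²)`, equals `π^(2n)/(2n+1)!`. -/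
theorem zeta_two_repeated (n : ℕ) (hn : 1 ≤ n) :
    ∑' k : {f : Fin n → ℕ // StrictMono f ∧ ∀ i, 1 ≤ f i},
      ∏ i, (1 : ℝ) / ((k.1 i : ℝ)) ^ 2
    = Real.pi ^ (2 * n) / (Nat.factorial (2 * n + 1) : ℝ) := by
  rw [ZetaTwoRep.zeta_eq_e n, ZetaTwoRep.e_eq_c n]
  rfl
end

section
/- The double zeta value satisfies Euler's relation: ζ(1,2) = ζ(3), i.e., ∑_{1 ≤ m < n} 1/(m · n^2) = ∑_{n ≥ 1} 1/n^3. -/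
open Filter Finset Topology

noncomputable section EulerZeta

private def ezb (m : ℕ) : ℝ := 1 / ((m : ℝ) + 1)

private def ezH (k : ℕ) : ℝ := ∑ j ∈ Finset.range k, ezb j

private lemma ezb_nonneg (m : ℕ) : 0 ≤ ezb m := by unfold ezb; positivity

private lemma ezb_tendsto : Tendsto ezb atTop (𝓝 0) := by
  have h : Tendsto (fun m : ℕ => (m : ℝ) + 1) atTop atTop :=
    tendsto_atTop_add_const_right _ _ tendsto_natCast_atTop_atTop
  exact Tendsto.congr (fun m => by simp [ezb, one_div]) h.inv_tendsto_atTop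

/-- Telescoping: `∑ₘ (1/(m+1) - 1/(m+k+1)) = H k`. -/
private lemma ez_telescope (k : ℕ) :
    HasSum (fun m : ℕ => ezb m - ezb (m + k)) (ezH k) := by
  rw [hasSum_iff_tendsto_nat_of_nonneg]
  · have key : ∀ M : ℕ, ∑ m ∈ Finset.range M, (ezb m - ezb (m + k))
        = ezH k - ∑ i ∈ Finset.range k, ezb (M + i) := by
      intro M
      have e1 := Finset.sum_range_add ezb M k
      have e2 := Finset.sum_range_add ezb k M
      have e3 : ∑ i ∈ Finset.range M, ezb (k + i) = ∑ i ∈ Finset.range M, ezb (i + k) :=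
        Finset.sum_congr rfl fun i _ => by rw [add_comm]
      have e4 : ∑ i ∈ Finset.range (k + M), ezb i = ∑ i ∈ Finset.range (M + k), ezb i := by
        rw [add_comm]
      rw [Finset.sum_sub_distrib]
      have := e2.symm.trans (e4.trans e1)
      rw [e3] at this
      unfold ezH
      linarith
    have hlim : Tendsto (fun M => ∑ i ∈ Finset.range k, ezb (M + i)) atTop (𝓝 0) := by
      have : Tendsto (fun M => ∑ i ∈ Finset.range k, ezb (M + i)) atTop
          (𝓝 (∑ _i ∈ Finset.range k, (0 : ℝ))) := by
        refine tendsto_finset_sum _ fun i _ => ?_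
        have h : Tendsto (fun M : ℕ => ((M + i : ℕ) : ℝ) + 1) atTop atTop := by
          apply tendsto_atTop_add_const_right
          exact tendsto_natCast_atTop_atTop.comp (tendsto_add_atTop_nat i)
        simpa [ezb, one_div, Pi.inv_def] using h.inv_tendsto_atTop
      simpa using this
    have := hlim.const_sub (ezH k)
    simp only [sub_zero] at this
    exact Tendsto.congr (fun M => (key M).symm) this
  · intro m
    have : ezb (m + k) ≤ ezb m := by
      unfold ezb
      apply one_div_le_one_div_of_le (by positivity)
      push_cast; linarith
    linarith

private def ezf (p : ℕ × ℕ) : ℝ :=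
  1 / (((p.2 : ℝ) + 1) * ((p.1 : ℝ) + 1) * ((p.1 : ℝ) + (p.2 : ℝ) + 2))

private def ezg (p : ℕ × ℕ) : ℝ :=
  1 / (((p.1 : ℝ) + 1) * ((p.1 : ℝ) + (p.2 : ℝ) + 2) ^ 2)

private lemma ez_sqrt_summable :
    Summable (fun n : ℕ => 1 / (((n : ℝ) + 1) * Real.sqrt ((n : ℝ) + 1))) := by
  have h : Summable (fun n : ℕ => 1 / (n : ℝ) ^ (3 / 2 : ℝ)) :=
    Real.summable_one_div_nat_rpow.mpr (by norm_num)
  have h2 := (summable_nat_add_iff 1).mpr h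
  refine h2.congr fun n => ?_
  have hpos : (0 : ℝ) < (n : ℝ) + 1 := by positivity
  rw [show (3 / 2 : ℝ) = 1 + 1 / 2 by norm_num]
  push_cast
  rw [Real.rpow_add hpos, Real.rpow_one, ← Real.sqrt_eq_rpow]

private lemma ezf_summable : Summable ezf := by
  have ha := ez_sqrt_summable
  have hprod : Summable (fun p : ℕ × ℕ =>
      (1 / (((p.1 : ℝ) + 1) * Real.sqrt ((p.1 : ℝ) + 1))) *
      (1 / (((p.2 : ℝ) + 1) * Real.sqrt ((p.2 : ℝ) + 1)))) :=
    ha.mul_of_nonneg ha (fun n => by positivity) (fun n => by positivity)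
  refine Summable.of_nonneg_of_le (fun p => by unfold ezf; positivity) (fun p => ?_) hprod
  obtain ⟨m, n⟩ := p
  unfold ezf
  simp only
  rw [div_mul_div_comm, one_mul]
  apply one_div_le_one_div_of_le (by positivity)
  have hm : Real.sqrt ((m : ℝ) + 1) ^ 2 = (m : ℝ) + 1 := Real.sq_sqrt (by positivity)
  have hn : Real.sqrt ((n : ℝ) + 1) ^ 2 = (n : ℝ) + 1 := Real.sq_sqrt (by positivity)
  have hm0 : 0 ≤ Real.sqrt ((m : ℝ) + 1) := Real.sqrt_nonneg _
  have hn0 : 0 ≤ Real.sqrt ((n : ℝ) + 1) := Real.sqrt_nonneg _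
  set s := Real.sqrt ((m : ℝ) + 1) with hs
  set t := Real.sqrt ((n : ℝ) + 1) with ht
  have key : s * t ≤ s ^ 2 + t ^ 2 := by nlinarith [sq_nonneg (s - t), mul_nonneg hm0 hn0]
  have e1 : ((m : ℝ) + (n : ℝ) + 2) = s ^ 2 + t ^ 2 := by rw [hm, hn]; ring
  rw [← hm, ← hn, e1]
  nlinarith [mul_le_mul_of_nonneg_left key
    (mul_nonneg (sq_nonneg s) (sq_nonneg t))]

private lemma ezg_summable : Summable ezg := by
  refine Summable.of_nonneg_of_le (fun p => by unfold ezg; positivity) (fun p => ?_) ezf_summable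
  obtain ⟨n, m⟩ := p
  unfold ezg ezf
  simp only
  apply one_div_le_one_div_of_le (by positivity)
  have h1 : (0 : ℝ) < (n : ℝ) + 1 := by positivity
  have h2 : (m : ℝ) + 1 ≤ (n : ℝ) + (m : ℝ) + 2 := by linarith [Nat.cast_nonneg (α := ℝ) n]
  have h3 : (0 : ℝ) ≤ ((n : ℝ) + 1) * ((n : ℝ) + (m : ℝ) + 2) := by positivity
  nlinarith [mul_le_mul_of_nonneg_left h2 h3]

/-- Inner sum: `∑ₘ f (n, m) = H (n+1) / (n+1)²`. -/
private lemma ez_inner (n : ℕ) :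
    HasSum (fun m : ℕ => ezf (n, m)) (1 / ((n : ℝ) + 1) ^ 2 * ezH (n + 1)) := by
  have h := (ez_telescope (n + 1)).mul_left (1 / ((n : ℝ) + 1) ^ 2)
  refine h.congr_fun fun m => ?_
  unfold ezf ezb
  push_cast
  have h1 : (0 : ℝ) < (m : ℝ) + 1 := by positivity
  have h2 : (0 : ℝ) < (n : ℝ) + 1 := by positivity
  have h3 : (0 : ℝ) < (m : ℝ) + (n : ℝ) + 2 := by positivity
  field_simp
  ring

private lemma ezv_summable : Summable (fun n : ℕ => 1 / ((n : ℝ) + 1) ^ 2 * ezH (n + 1)) := by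
  have h := ezf_summable.prod
  refine h.congr fun n => ?_
  exact (ez_inner n).tsum_eq

private lemma ezT_eq1 : ∑' p : ℕ × ℕ, ezf p = ∑' n : ℕ, 1 / ((n : ℝ) + 1) ^ 2 * ezH (n + 1) := by
  rw [Summable.tsum_prod ezf_summable]
  exact tsum_congr fun n => (ez_inner n).tsum_eq

private lemma ez_split (p : ℕ × ℕ) : ezf p = ezg p + ezg p.swap := by
  obtain ⟨n, m⟩ := p
  unfold ezf ezg
  simp only [Prod.swap_prod_mk]
  have h1 : (0 : ℝ) < (m : ℝ) + 1 := by positivity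
  have h2 : (0 : ℝ) < (n : ℝ) + 1 := by positivity
  have h3 : (0 : ℝ) < (n : ℝ) + (m : ℝ) + 2 := by positivity
  have h4 : (0 : ℝ) < (m : ℝ) + (n : ℝ) + 2 := by positivity
  field_simp
  ring

private lemma ezgswap_summable : Summable (fun p : ℕ × ℕ => ezg p.swap) :=
  (Equiv.prodComm ℕ ℕ).summable_iff.mpr ezg_summable

private lemma ezT_eq2 : ∑' p : ℕ × ℕ, ezf p = 2 * ∑' p : ℕ × ℕ, ezg p := by
  calc ∑' p : ℕ × ℕ, ezf p = ∑' p : ℕ × ℕ, (ezg p + ezg p.swap) :=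
        tsum_congr fun p => ez_split p
    _ = (∑' p : ℕ × ℕ, ezg p) + ∑' p : ℕ × ℕ, ezg p.swap :=
        Summable.tsum_add ezg_summable ezgswap_summable
    _ = 2 * ∑' p : ℕ × ℕ, ezg p := by
        rw [show (∑' p : ℕ × ℕ, ezg p.swap) = ∑' p : ℕ × ℕ, ezg p from
          (Equiv.prodComm ℕ ℕ).tsum_eq ezg]
        ring

private def ezE1 : ℕ × ℕ ≃ {q : ℕ × ℕ // 1 ≤ q.1 ∧ q.1 < q.2} where
  toFun p := ⟨(p.1 + 1, p.1 + p.2 + 2), by omega⟩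
  invFun q := (q.1.1 - 1, q.1.2 - q.1.1 - 1)
  left_inv p := by obtain ⟨a, b⟩ := p; simp; omega
  right_inv q := by
    obtain ⟨⟨a, b⟩, h⟩ := q
    obtain ⟨h1, h2⟩ := h
    apply Subtype.ext
    simp only
    apply Prod.ext <;> simp <;> omega

private def ezE2 : (Σ n : ℕ, Fin (n + 1)) ≃ ℕ × ℕ where
  toFun x := ((x.2 : ℕ), x.1 - (x.2 : ℕ))
  invFun p := ⟨p.1 + p.2, ⟨p.1, by omega⟩⟩
  left_inv x := by
    obtain ⟨n, m⟩ := x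
    have hm : (m : ℕ) ≤ n := Nat.lt_succ_iff.mp m.isLt
    have h : (m : ℕ) + (n - (m : ℕ)) = n := by omega
    refine Sigma.ext ?_ ?_
    · show (m : ℕ) + (n - (m : ℕ)) = n
      exact h
    · refine (Fin.heq_ext_iff ?_).mpr rfl
      show (m : ℕ) + (n - (m : ℕ)) + 1 = n + 1
      omega
  right_inv p := by obtain ⟨a, b⟩ := p; simp

private lemma ezZ_eq_sum_g :
    (∑' p : {q : ℕ × ℕ // 1 ≤ q.1 ∧ q.1 < q.2},
      (1 : ℝ) / ((p.1.1 : ℝ) * (p.1.2 : ℝ) ^ 2)) = ∑' p : ℕ × ℕ, ezg p := by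
  rw [← ezE1.tsum_eq (fun p : {q : ℕ × ℕ // 1 ≤ q.1 ∧ q.1 < q.2} =>
    (1 : ℝ) / ((p.1.1 : ℝ) * (p.1.2 : ℝ) ^ 2))]
  refine tsum_congr fun p => ?_
  obtain ⟨a, b⟩ := p
  unfold ezg
  simp only [ezE1, Equiv.coe_fn_mk]
  push_cast
  ring_nf

private lemma ez_fin_sum (n : ℕ) :
    ∑ m : Fin (n + 1), ezg ((m : ℕ), n - (m : ℕ)) = 1 / ((n : ℝ) + 2) ^ 2 * ezH (n + 1) := by
  unfold ezH
  rw [Finset.mul_sum, Fin.sum_univ_eq_sum_range (fun m => ezg (m, n - m))]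
  refine Finset.sum_congr rfl fun m hm => ?_
  have hm' : m ≤ n := by simpa [Nat.lt_succ_iff] using hm
  unfold ezg ezb
  simp only
  have : ((m : ℝ) + ((n - m : ℕ) : ℝ) + 2) = (n : ℝ) + 2 := by
    have : ((n - m : ℕ) : ℝ) = (n : ℝ) - (m : ℝ) := by
      push_cast [Nat.cast_sub hm']; ring
    rw [this]; ring
  rw [this]
  have h1 : (0 : ℝ) < (m : ℝ) + 1 := by positivity
  have h2 : (0 : ℝ) < (n : ℝ) + 2 := by positivity
  field_simp

private lemma ez_sum_g_eq :
    ∑' p : ℕ × ℕ, ezg p = ∑' n : ℕ, 1 / ((n : ℝ) + 2) ^ 2 * ezH (n + 1) := by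
  have hsum : Summable fun x : Σ n : ℕ, Fin (n + 1) => ezg (ezE2 x) :=
    ezE2.summable_iff.mpr ezg_summable
  rw [← ezE2.tsum_eq ezg, Summable.tsum_sigma hsum]
  refine tsum_congr fun n => ?_
  rw [tsum_fintype]
  exact ez_fin_sum n

private lemma ezw_summable : Summable (fun n : ℕ => 1 / ((n : ℝ) + 1) ^ 2 * ezH n) := by
  refine Summable.of_nonneg_of_le (fun n => ?_) (fun n => ?_) ezv_summable
  · have : 0 ≤ ezH n := Finset.sum_nonneg fun j _ => ezb_nonneg j
    positivity
  · have h : ezH n ≤ ezH (n + 1) := by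
      unfold ezH
      rw [Finset.sum_range_succ]
      linarith [ezb_nonneg n]
    have : (0:ℝ) ≤ 1 / ((n : ℝ) + 1) ^ 2 := by positivity
    exact mul_le_mul_of_nonneg_left h this

private lemma ez3_summable : Summable (fun n : ℕ => (1 : ℝ) / ((n : ℝ) + 1) ^ 3) := by
  have h : Summable (fun n : ℕ => 1 / (n : ℝ) ^ 3) :=
    Real.summable_one_div_nat_pow.mpr (by norm_num)
  have h2 := (summable_nat_add_iff 1).mpr h
  refine h2.congr fun n => ?_
  push_cast
  ring

end EulerZeta

/-- Euler's relation `ζ(1,2) = ζ(3)`: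
`∑_{1 ≤ m < n} 1/(m n²) = ∑_{n ≥ 1} 1/n³`. -/
theorem euler_zeta_one_two :
    ∑' p : {q : ℕ × ℕ // 1 ≤ q.1 ∧ q.1 < q.2},
      (1 : ℝ) / ((p.1.1 : ℝ) * (p.1.2 : ℝ) ^ 2)
    = ∑' n : ℕ, (1 : ℝ) / ((n : ℝ) + 1) ^ 3 := by
  set Z := ∑' p : ℕ × ℕ, ezg p with hZ
  have hZsum : (∑' p : {q : ℕ × ℕ // 1 ≤ q.1 ∧ q.1 < q.2},
      (1 : ℝ) / ((p.1.1 : ℝ) * (p.1.2 : ℝ) ^ 2)) = Z := ezZ_eq_sum_g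
  rw [hZsum]
  -- Z as a shifted series of w
  have hshift : ∑' n : ℕ, 1 / ((n : ℝ) + 1) ^ 2 * ezH n = Z := by
    rw [Summable.tsum_eq_zero_add ezw_summable]
    have hw0 : ezH 0 = 0 := by simp [ezH]
    rw [hw0, mul_zero, zero_add, hZ, ez_sum_g_eq]
    refine tsum_congr fun n => ?_
    push_cast
    ring_nf
  -- T = Z + ζ3
  have hsplit : ∀ n : ℕ, 1 / ((n : ℝ) + 1) ^ 2 * ezH (n + 1)
      = 1 / ((n : ℝ) + 1) ^ 2 * ezH n + 1 / ((n : ℝ) + 1) ^ 3 := by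
    intro n
    unfold ezH
    rw [Finset.sum_range_succ]
    unfold ezb
    have : (0:ℝ) < (n : ℝ) + 1 := by positivity
    field_simp
  have hT1 : ∑' p : ℕ × ℕ, ezf p = Z + ∑' n : ℕ, (1 : ℝ) / ((n : ℝ) + 1) ^ 3 := by
    rw [ezT_eq1]
    calc ∑' n : ℕ, 1 / ((n : ℝ) + 1) ^ 2 * ezH (n + 1)
        = ∑' n : ℕ, (1 / ((n : ℝ) + 1) ^ 2 * ezH n + 1 / ((n : ℝ) + 1) ^ 3) :=
          tsum_congr hsplit
      _ = (∑' n : ℕ, 1 / ((n : ℝ) + 1) ^ 2 * ezH n) + ∑' n : ℕ, (1 : ℝ) / ((n : ℝ) + 1) ^ 3 :=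
          Summable.tsum_add ezw_summable ez3_summable
      _ = Z + ∑' n : ℕ, (1 : ℝ) / ((n : ℝ) + 1) ^ 3 := by rw [hshift]
  have hT2 : ∑' p : ℕ × ℕ, ezf p = 2 * Z := ezT_eq2
  linarith
end

section
/- The iterated integral ∫_{0 < t_1 < t_2 < t_3 < 1} (dt_1/(1-t_1)) (dt_2/t_2) (dt_3/t_3) equals ζ(3) = ∑_{n≥1} 1/n^3. -/
open MeasureTheory Set

namespace KontsevichZeta3

noncomputable section

/-- The open simplex. -/
def S : Set (ℝ × ℝ × ℝ) :=
  {p : ℝ × ℝ × ℝ | 0 < p.1 ∧ p.1 < p.2.1 ∧ p.2.1 < p.2.2 ∧ p.2.2 < 1}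

lemma hS : MeasurableSet S := by
  apply MeasurableSet.inter
  · exact measurableSet_lt measurable_const measurable_fst
  apply MeasurableSet.inter
  · exact measurableSet_lt measurable_fst (measurable_fst.comp measurable_snd)
  apply MeasurableSet.inter
  · exact measurableSet_lt (measurable_fst.comp measurable_snd)
      (measurable_snd.comp measurable_snd)
  · exact measurableSet_lt (measurable_snd.comp measurable_snd) measurable_const

/-- basic 1-d computation. -/
lemma lint_pow (n : ℕ) (b C : ℝ) (hb : 0 < b) (hC : 0 ≤ C) :
    ∫⁻ x in Ioo (0:ℝ) b, ENNReal.ofReal (x ^ n * C) =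
      ENNReal.ofReal (b ^ (n + 1) / ((n : ℝ) + 1) * C) := by
  rw [← ofReal_integral_eq_lintegral_ofReal]
  · congr 1
    rw [← integral_Ioc_eq_integral_Ioo, ← intervalIntegral.integral_of_le hb.le,
      intervalIntegral.integral_mul_const, integral_pow]
    ring
  · exact (((continuous_pow n).mul continuous_const).integrableOn_Icc).mono_set
      Ioo_subset_Icc_self
  · filter_upwards [ae_restrict_mem measurableSet_Ioo] with x hx
    exact mul_nonneg (pow_nonneg hx.1.le n) hC

lemma g_meas (n : ℕ) :
    Measurable fun p : ℝ × ℝ × ℝ =>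
      ENNReal.ofReal (p.1 ^ n * (1 / p.2.1) * (1 / p.2.2)) := by
  simp only [one_div]
  exact ENNReal.measurable_ofReal.comp
    (((measurable_fst.pow_const n).mul (measurable_fst.comp measurable_snd).inv).mul
      (measurable_snd.comp measurable_snd).inv)

/-- per-n triple integral. -/
lemma Jn (n : ℕ) :
    (∫⁻ p in S, ENNReal.ofReal (p.1 ^ n * (1 / p.2.1) * (1 / p.2.2))) =
      ENNReal.ofReal (1 / ((n : ℝ) + 1) ^ 3) := by
  set g : ℝ × ℝ × ℝ → ENNReal :=
    fun p => ENNReal.ofReal (p.1 ^ n * (1 / p.2.1) * (1 / p.2.2)) with hg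
  have hgm : Measurable g := g_meas n
  have hmind : Measurable (S.indicator g) := hgm.indicator hS
  rw [← lintegral_indicator hS, Measure.volume_eq_prod ℝ (ℝ × ℝ),
    lintegral_prod_symm _ hmind.aemeasurable]
  rw [Measure.volume_eq_prod ℝ ℝ,
    lintegral_prod_symm _ (Measurable.lintegral_prod_left
      (f := fun t1 yz => S.indicator g (t1, yz)) hmind).aemeasurable]
  have hnp : (0:ℝ) < (n : ℝ) + 1 := by positivity
  -- the innermost integral
  have h1 : ∀ t3 t2 : ℝ, (∫⁻ t1, S.indicator g (t1, (t2, t3))) =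
      if t3 < 1 then
        (Ioo (0:ℝ) t3).indicator
          (fun s => ENNReal.ofReal (s ^ n * (1 / ((n:ℝ)+1) * (1 / t3)))) t2
      else 0 := by
    intro t3 t2
    have key : ∀ t1, S.indicator g (t1, (t2, t3)) =
        if t2 < t3 ∧ t3 < 1 then
          (Ioo (0:ℝ) t2).indicator
            (fun s => ENNReal.ofReal (s ^ n * ((1/t2) * (1/t3)))) t1
        else 0 := by
      intro t1
      by_cases h : t2 < t3 ∧ t3 < 1
      · rw [if_pos h]
        by_cases h1 : t1 ∈ Ioo (0:ℝ) t2
        · rw [indicator_of_mem h1, indicator_of_mem]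
          · simp [g, mul_assoc]
          · exact ⟨h1.1, h1.2, h.1, h.2⟩
        · rw [indicator_of_notMem h1, indicator_of_notMem]
          intro hm
          exact h1 ⟨hm.1, hm.2.1⟩
      · rw [if_neg h, indicator_of_notMem]
        intro hm
        exact h ⟨hm.2.2.1, hm.2.2.2⟩
    rw [lintegral_congr key]
    by_cases h : t2 < t3 ∧ t3 < 1
    · simp only [if_pos h, if_pos h.2]
      rw [lintegral_indicator measurableSet_Ioo]
      by_cases h2 : 0 < t2
      · have ht3 : 0 < t3 := lt_trans h2 h.1
        rw [lint_pow n t2 _ h2 (by positivity), indicator_of_mem (mem_Ioo.mpr ⟨h2, h.1⟩)]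
        congr 1
        field_simp
        ring
      · rw [Ioo_eq_empty (by intro hlt; exact h2 hlt), Measure.restrict_empty,
          lintegral_zero_measure, indicator_of_notMem]
        intro hm; exact h2 hm.1
    · simp only [if_neg h, lintegral_zero]
      split_ifs with h3
      · rw [indicator_of_notMem]
        intro hm
        exact h ⟨hm.2, h3⟩
      · rfl
  -- the middle integral
  have h2 : ∀ t3 : ℝ, (∫⁻ t2, (if t3 < 1 then
        (Ioo (0:ℝ) t3).indicator
          (fun s => ENNReal.ofReal (s ^ n * (1 / ((n:ℝ)+1) * (1 / t3)))) t2
      else 0)) =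
      (Ioo (0:ℝ) 1).indicator
        (fun s => ENNReal.ofReal (s ^ n * (1 / ((n:ℝ)+1)^2))) t3 := by
    intro t3
    by_cases h : t3 < 1
    · simp only [if_pos h]
      rw [lintegral_indicator measurableSet_Ioo]
      by_cases h0 : 0 < t3
      · rw [lint_pow n t3 _ h0 (by positivity), indicator_of_mem (mem_Ioo.mpr ⟨h0, h⟩)]
        congr 1
        field_simp
        ring
      · rw [Ioo_eq_empty (by intro hlt; exact h0 hlt), Measure.restrict_empty,
          lintegral_zero_measure, indicator_of_notMem]
        intro hm; exact h0 hm.1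
    · simp only [if_neg h, lintegral_zero]
      rw [indicator_of_notMem]
      intro hm; exact h hm.2
  simp only [h1, h2]
  rw [lintegral_indicator measurableSet_Ioo, lint_pow n 1 _ one_pos (by positivity)]
  congr 1
  rw [one_pow]
  field_simp

end

end KontsevichZeta3

/-- Kontsevich's integral representation of `ζ(3)`:
`∫_{0 < t₁ < t₂ < t₃ < 1} dt₁/(1-t₁) · dt₂/t₂ · dt₃/t₃ = ∑_{n ≥ 1} 1/n³`. -/
theorem kontsevich_zeta_three :
    ∫ t in {p : ℝ × ℝ × ℝ | 0 < p.1 ∧ p.1 < p.2.1 ∧ p.2.1 < p.2.2 ∧ p.2.2 < 1},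
      (1 / (1 - t.1)) * (1 / t.2.1) * (1 / t.2.2)
    = ∑' n : ℕ, (1 : ℝ) / ((n : ℝ) + 1) ^ 3 := by
  open KontsevichZeta3 in
  show ∫ t in S, (1 / (1 - t.1)) * (1 / t.2.1) * (1 / t.2.2) = _
  have hsummable : Summable fun n : ℕ => (1:ℝ) / ((n:ℝ)+1)^3 := by
    have h := Real.summable_one_div_nat_pow.mpr (show 1 < 3 by norm_num)
    have h2 := (summable_nat_add_iff 1).mpr h
    refine h2.congr fun n => ?_
    push_cast
    ring
  have hFmeas : Measurable fun p : ℝ × ℝ × ℝ =>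
      (1 / (1 - p.1)) * (1 / p.2.1) * (1 / p.2.2) := by
    simp only [one_div]
    exact (((measurable_const.sub measurable_fst).inv.mul
      (measurable_fst.comp measurable_snd).inv).mul
      (measurable_snd.comp measurable_snd).inv)
  have hnn : 0 ≤ᶠ[ae (volume.restrict S)]
      fun p : ℝ × ℝ × ℝ => (1 / (1 - p.1)) * (1 / p.2.1) * (1 / p.2.2) := by
    filter_upwards [ae_restrict_mem hS] with p hp
    obtain ⟨h1, h2, h3, h4⟩ := hp
    have : (0:ℝ) < 1 - p.1 := by linarith
    have hb : (0:ℝ) < p.2.1 := lt_trans h1 h2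
    have hc : (0:ℝ) < p.2.2 := lt_trans hb h3
    positivity
  rw [integral_eq_lintegral_of_nonneg_ae hnn hFmeas.aestronglyMeasurable]
  have key : (∫⁻ p in S,
      ENNReal.ofReal ((1 / (1 - p.1)) * (1 / p.2.1) * (1 / p.2.2)))
      = ENNReal.ofReal (∑' n : ℕ, (1:ℝ) / ((n:ℝ)+1)^3) := by
    have step1 : (∫⁻ p in S,
        ENNReal.ofReal ((1 / (1 - p.1)) * (1 / p.2.1) * (1 / p.2.2)))
        = ∫⁻ p in S, ∑' n : ℕ,
            ENNReal.ofReal (p.1 ^ n * (1 / p.2.1) * (1 / p.2.2)) := by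
      apply setLIntegral_congr_fun hS
      intro p hp
      obtain ⟨h1, h2, h3, h4⟩ := hp
      have ha1 : p.1 < 1 := by linarith
      have hb : (0:ℝ) < p.2.1 := lt_trans h1 h2
      have hc : (0:ℝ) < p.2.2 := lt_trans hb h3
      have hgeo := hasSum_geometric_of_lt_one h1.le ha1
      have hsum : HasSum (fun k : ℕ => p.1 ^ k * (1 / p.2.1 * (1 / p.2.2)))
          ((1 - p.1)⁻¹ * (1 / p.2.1 * (1 / p.2.2))) :=
        hgeo.mul_right _
      calc ENNReal.ofReal ((1 / (1 - p.1)) * (1 / p.2.1) * (1 / p.2.2))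
          = ENNReal.ofReal (∑' k : ℕ, p.1 ^ k * (1 / p.2.1 * (1 / p.2.2))) := by
            rw [hsum.tsum_eq, one_div, mul_assoc]
        _ = ∑' k : ℕ, ENNReal.ofReal (p.1 ^ k * (1 / p.2.1 * (1 / p.2.2))) :=
            ENNReal.ofReal_tsum_of_nonneg
              (fun k => by positivity) hsum.summable
        _ = ∑' k : ℕ, ENNReal.ofReal (p.1 ^ k * (1 / p.2.1) * (1 / p.2.2)) := by
            simp_rw [mul_assoc]
    rw [step1, lintegral_tsum fun n => (g_meas n).aemeasurable,
      tsum_congr fun n => Jn n,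
      ← ENNReal.ofReal_tsum_of_nonneg (fun n => by positivity) hsummable]
  rw [key, ENNReal.toReal_ofReal (tsum_nonneg fun n => by positivity)]
end

section
/- The iterated integral ∫_{0 < t_1 < t_2 < 1} (dt_1/(1-t_1)) (dt_2/t_2) equals ζ(2) = π²/6. -/
open MeasureTheory Real Set

lemma inner_int {y : ℝ} (hy : y ∈ Ioo (0:ℝ) 1) :
    ∫ x in Ioo (0:ℝ) y, (1 / (1 - x)) * (1 / y) = (-Real.log (1 - y)) * (1 / y) := by
  rw [← integral_Ioc_eq_integral_Ioo, ← intervalIntegral.integral_of_le hy.1.le]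
  rw [intervalIntegral.integral_mul_const]
  congr 1
  have : ∫ x in (0:ℝ)..y, 1 / (1 - x) = ∫ u in (1 - y)..(1 - 0), 1 / u := by
    simpa using (intervalIntegral.integral_comp_sub_left (fun u => 1 / u) 1 (a := 0) (b := y))
  rw [this]
  rw [integral_one_div_of_pos (by linarith [hy.2]) (by norm_num)]
  rw [sub_zero, one_div, Real.log_inv]

/-- Kontsevich's integral formula in weight 2:
`∫_{0 < t₁ < t₂ < 1} dt₁/(1-t₁) · dt₂/t₂ = ζ(2) = π²/6`. -/
theorem kontsevich_zeta_two :
    ∫ t in {p : ℝ × ℝ | 0 < p.1 ∧ p.1 < p.2 ∧ p.2 < 1},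
      (1 / (1 - t.1)) * (1 / t.2)
    = Real.pi ^ 2 / 6 := by
  set S : Set (ℝ × ℝ) := {p : ℝ × ℝ | 0 < p.1 ∧ p.1 < p.2 ∧ p.2 < 1} with hS
  have hSm : MeasurableSet S := by
    apply MeasurableSet.inter (measurableSet_lt measurable_const measurable_fst)
    exact MeasurableSet.inter (measurableSet_lt measurable_fst measurable_snd)
      (measurableSet_lt measurable_snd measurable_const)
  have hfm : Measurable fun p : ℝ × ℝ => (1 / (1 - p.1)) * (1 / p.2) := by
    apply Measurable.mul
    · exact (measurable_const.sub measurable_fst).const_div 1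
    · exact measurable_snd.const_div 1
  have hnn : 0 ≤ᵐ[volume.restrict S] fun p : ℝ × ℝ => (1 / (1 - p.1)) * (1 / p.2) := by
    refine (ae_restrict_iff' hSm).2 (Filter.Eventually.of_forall fun p hp => ?_)
    obtain ⟨h1, h2, h3⟩ := hp
    have ha : (0:ℝ) < 1 - p.1 := by linarith
    have hb : (0:ℝ) < p.2 := by linarith
    positivity
  rw [integral_eq_lintegral_of_nonneg_ae hnn hfm.aestronglyMeasurable]
  have key : ∫⁻ p in S, ENNReal.ofReal ((1 / (1 - p.1)) * (1 / p.2))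
      = ENNReal.ofReal (π ^ 2 / 6) := by
    rw [← lintegral_indicator hSm, Measure.volume_eq_prod,
      lintegral_prod_symm _ ((hfm.ennreal_ofReal.indicator hSm).aemeasurable)]
    have step1 : ∀ y : ℝ, ∫⁻ x, S.indicator
          (fun p : ℝ × ℝ => ENNReal.ofReal ((1 / (1 - p.1)) * (1 / p.2))) (x, y)
        = (Ioo (0:ℝ) 1).indicator
          (fun y => ENNReal.ofReal ((-Real.log (1 - y)) * (1 / y))) y := by
      intro y
      by_cases hy : y ∈ Ioo (0:ℝ) 1
      · rw [indicator_of_mem hy]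
        have hset : ∀ x : ℝ, S.indicator
              (fun p : ℝ × ℝ => ENNReal.ofReal ((1 / (1 - p.1)) * (1 / p.2))) (x, y)
            = (Ioo (0:ℝ) y).indicator
              (fun x => ENNReal.ofReal ((1 / (1 - x)) * (1 / y))) x := by
          intro x
          by_cases hx : x ∈ Ioo (0:ℝ) y
          · rw [indicator_of_mem hx, indicator_of_mem (show (x, y) ∈ S from ⟨hx.1, hx.2, hy.2⟩)]
          · rw [indicator_of_notMem hx, indicator_of_notMem]
            intro hmem
            exact hx ⟨hmem.1, hmem.2.1⟩
        simp_rw [hset]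
        rw [lintegral_indicator measurableSet_Ioo]
        have hint : IntegrableOn (fun x => (1 / (1 - x)) * (1 / y)) (Ioo (0:ℝ) y) := by
          apply (ContinuousOn.integrableOn_compact isCompact_Icc _).mono_set Ioo_subset_Icc_self
          apply ContinuousOn.mul _ continuousOn_const
          apply ContinuousOn.div continuousOn_const (by fun_prop)
          intro x hx
          have := hx.2
          have := hy.2
          intro h; linarith [sub_eq_zero.mp h]
        have hnn' : 0 ≤ᵐ[volume.restrict (Ioo (0:ℝ) y)]
            fun x => (1 / (1 - x)) * (1 / y) := by
          refine (ae_restrict_iff' measurableSet_Ioo).2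
            (Filter.Eventually.of_forall fun x hx => ?_)
          have h1 : (0:ℝ) < 1 - x := by linarith [hx.2, hy.2]
          have h2 : (0:ℝ) < y := hy.1
          positivity
        rw [← ofReal_integral_eq_lintegral_ofReal hint hnn', inner_int hy]
      · rw [indicator_of_notMem hy]
        have : ∀ x : ℝ, S.indicator
              (fun p : ℝ × ℝ => ENNReal.ofReal ((1 / (1 - p.1)) * (1 / p.2))) (x, y) = 0 := by
          intro x
          apply indicator_of_notMem
          intro hmem
          exact hy ⟨lt_trans hmem.1 hmem.2.1, hmem.2.2⟩
        simp_rw [this, lintegral_zero]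
    simp_rw [step1]
    rw [lintegral_indicator measurableSet_Ioo]
    have step2 : ∀ y ∈ Ioo (0:ℝ) 1,
        ENNReal.ofReal ((-Real.log (1 - y)) * (1 / y))
        = ∑' n : ℕ, ENNReal.ofReal (y ^ n / (n + 1)) := by
      intro y hy
      have habs : |y| < 1 := abs_lt.2 ⟨by linarith [hy.1], hy.2⟩
      have hsum := (Real.hasSum_pow_div_log_of_abs_lt_one habs).mul_right (1 / y)
      have heq : ∀ n : ℕ, y ^ (n + 1) / (n + 1) * (1 / y) = y ^ n / (n + 1) := by
        intro n
        field_simp [pow_succ, hy.1.ne']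
        ring
      simp_rw [heq] at hsum
      rw [← hsum.tsum_eq]
      refine ENNReal.ofReal_tsum_of_nonneg (fun n => ?_) hsum.summable
      have := hy.1
      positivity
    rw [setLIntegral_congr_fun measurableSet_Ioo
      step2]
    rw [lintegral_tsum fun n : ℕ => (Measurable.ennreal_ofReal (show Measurable fun y : ℝ => y ^ n / (n + 1) by fun_prop)).aemeasurable]
    have step3 : ∀ n : ℕ, ∫⁻ y in Ioo (0:ℝ) 1, ENNReal.ofReal (y ^ n / (n + 1))
        = ENNReal.ofReal (1 / ((n : ℝ) + 1) ^ 2) := by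
      intro n
      have hint : IntegrableOn (fun y : ℝ => y ^ n / (n + 1)) (Ioo (0:ℝ) 1) := by
        have hc : Continuous fun y : ℝ => y ^ n / (n + 1) := by fun_prop
        exact (hc.continuousOn.integrableOn_compact isCompact_Icc).mono_set Ioo_subset_Icc_self
      have hnn' : 0 ≤ᵐ[volume.restrict (Ioo (0:ℝ) 1)] fun y : ℝ => y ^ n / (n + 1) := by
        refine (ae_restrict_iff' measurableSet_Ioo).2
          (Filter.Eventually.of_forall fun x hx => ?_)
        have := hx.1
        positivity
      rw [← ofReal_integral_eq_lintegral_ofReal hint hnn']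
      congr 1
      rw [← integral_Ioc_eq_integral_Ioo, ← intervalIntegral.integral_of_le zero_le_one]
      rw [intervalIntegral.integral_div, integral_pow]
      push_cast
      simp only [one_pow, zero_pow (Nat.succ_ne_zero n), sub_zero]
      rw [div_div]
      congr 1
      ring
    simp_rw [step3]
    have hsumz : HasSum (fun n : ℕ => 1 / ((n : ℝ) + 1) ^ 2) (π ^ 2 / 6) := by
      have h := hasSum_zeta_two
      have := (hasSum_nat_add_iff (f := fun n : ℕ => (1:ℝ) / (n : ℝ) ^ 2) 1).2 (by simpa using h)
      simpa using this
    rw [← ENNReal.ofReal_tsum_of_nonneg (fun n => by positivity) hsumz.summable, hsumz.tsum_eq]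
  rw [key, ENNReal.toReal_ofReal (by positivity)]
end

section
/- Ramanujan's formula: ζ(3) = (7/180)π³ − 2 ∑_{n≥1} 1/(n³(e^{2πn} − 1)). -/
open Real Complex MeasureTheory Set intervalIntegral

noncomputable section

lemma fourier_cosh_coeff (a : ℝ) (ha : 0 < a) (n : ℤ) :
    haveI : Fact (0 < 2 * π) := ⟨by positivity⟩
    fourierCoeff (fun x : AddCircle (2 * π) =>
        AddCircle.liftIco (2 * π) (-π) (fun t : ℝ => Complex.cosh (a * t)) x) n
      * Complex.exp (Complex.I * n * π)
    = ((Real.sinh (a * π) * a / π : ℝ) : ℂ) / ((a : ℂ) ^ 2 + (n : ℂ) ^ 2) := by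
  haveI : Fact (0 < 2 * π) := ⟨by positivity⟩
  have hπ : (-π) + 2 * π = π := by ring
  have hc1 : ((a : ℂ) - Complex.I * n) ≠ 0 := by
    intro h
    have := congrArg Complex.re h
    simp [Complex.sub_re, Complex.mul_re] at this
    exact ha.ne' this
  have hc2 : ((a : ℂ) + Complex.I * n) ≠ 0 := by
    intro h
    have := congrArg Complex.re h
    simp [Complex.add_re, Complex.mul_re] at this
    exact ha.ne' this
  have hprod : ((a : ℂ) - Complex.I * n) * ((a : ℂ) + Complex.I * n)
      = (a : ℂ) ^ 2 + (n : ℂ) ^ 2 := by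
    have : Complex.I ^ 2 = -1 := Complex.I_sq
    ring_nf
    rw [this]; ring
  have key := fourierCoeff_eq_intervalIntegral
      (fun x : AddCircle (2 * π) =>
        AddCircle.liftIco (2 * π) (-π) (fun t : ℝ => Complex.cosh (a * t)) x) n (-π)
  rw [hπ] at key
  -- rewrite the integrand a.e.
  have hint : ∀ x : ℝ, (fourier (-n) (x : AddCircle (2 * π)) : ℂ) • Complex.cosh (a * x)
      = Complex.exp (((a : ℂ) - Complex.I * n) * x) / 2
        + Complex.exp ((-(a : ℂ) - Complex.I * n) * x) / 2 := by
    intro x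
    rw [fourier_coe_apply]
    push_cast
    have harg : (2 * (π : ℂ) * Complex.I * (-(n : ℂ)) * (x : ℂ) / (2 * (π : ℂ)))
        = -(Complex.I * n * x) := by
      have h2 : (2 * (π : ℂ)) ≠ 0 := by
        simp [Real.pi_ne_zero]
      field_simp
    rw [harg]
    rw [Complex.cosh, show ((a : ℂ) - Complex.I * n) * x = (a * x) + -(Complex.I * n * x) by ring,
      show (-(a : ℂ) - Complex.I * n) * x = (-(a * x)) + -(Complex.I * n * x) by ring,
      Complex.exp_add, Complex.exp_add]
    simp only [smul_eq_mul]
    ring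
  have hae : (∫ x in (-π)..π, (fourier (-n) (x : AddCircle (2 * π)) : ℂ) •
        AddCircle.liftIco (2 * π) (-π) (fun t : ℝ => Complex.cosh (a * t)) x)
      = ∫ x in (-π)..π, (Complex.exp (((a : ℂ) - Complex.I * n) * x) / 2
          + Complex.exp ((-(a : ℂ) - Complex.I * n) * x) / 2) := by
    apply intervalIntegral.integral_congr_ae
    have h1 : ({π}ᶜ : Set ℝ) ∈ ae volume := compl_mem_ae_iff.2 (measure_singleton _)
    filter_upwards [h1] with x hx hx2
    have hxm : x ∈ Ico (-π) (-π + 2 * π) := by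
      rw [hπ]
      rw [Set.uIoc_of_le (by linarith [Real.pi_pos])] at hx2
      exact ⟨hx2.1.le, lt_of_le_of_ne hx2.2 hx⟩
    rw [AddCircle.liftIco_coe_apply hxm, hint]
  rw [hae] at key
  have hii : ∀ c : ℂ, IntervalIntegrable (fun x : ℝ => Complex.exp (c * x) / 2) volume (-π) π := by
    intro c
    exact ((Complex.continuous_exp.comp (continuous_const.mul Complex.continuous_ofReal)).div_const
      2).intervalIntegrable _ _
  rw [intervalIntegral.integral_add (hii _) (hii _), intervalIntegral.integral_div,
    intervalIntegral.integral_div, integral_exp_mul_complex hc1,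
    integral_exp_mul_complex (show (-(a:ℂ) - Complex.I*n) ≠ 0 by
      intro h; apply hc2; rw [← neg_eq_zero]; rw [← h]; ring)] at key
  -- now pure algebra
  set u : ℂ := Complex.exp (Complex.I * n * π) with hu
  have huu : u * u = 1 := by
    rw [hu, ← Complex.exp_add, show Complex.I * n * π + Complex.I * n * π
      = (n : ℂ) * (2 * π * Complex.I) by ring]
    exact Complex.exp_int_mul_two_pi_mul_I n
  have hv : Complex.exp (-(Complex.I * n * π)) = u := by
    have h0 : u * Complex.exp (-(Complex.I * n * π)) = 1 := by
      rw [hu, ← Complex.exp_add]; simp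
    have := h0.trans huu.symm
    exact (mul_left_cancel₀ (Complex.exp_ne_zero _) this)
  have e1 : Complex.exp (((a : ℂ) - Complex.I * n) * π) = Complex.exp (a * π) * u := by
    rw [show ((a : ℂ) - Complex.I * n) * π = (a * π) + -(Complex.I * n * π) by ring,
      Complex.exp_add, hv]
  have e2 : Complex.exp (((a : ℂ) - Complex.I * n) * (-π : ℝ))
      = Complex.exp (-(a * π)) * u := by
    rw [show ((a : ℂ) - Complex.I * n) * ((-π : ℝ) : ℂ) = (-((a:ℂ) * π)) + (Complex.I * n * π) by
      push_cast; ring, Complex.exp_add]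
  have e3 : Complex.exp ((-(a : ℂ) - Complex.I * n) * π) = Complex.exp (-(a * π)) * u := by
    rw [show (-(a : ℂ) - Complex.I * n) * π = (-((a:ℂ) * π)) + -(Complex.I * n * π) by ring,
      Complex.exp_add, hv]
  have e4 : Complex.exp ((-(a : ℂ) - Complex.I * n) * (-π : ℝ)) = Complex.exp (a * π) * u := by
    rw [show (-(a : ℂ) - Complex.I * n) * ((-π : ℝ) : ℂ) = ((a:ℂ) * π) + (Complex.I * n * π) by
      push_cast; ring, Complex.exp_add]
  have hc2' : (-(a : ℂ) - Complex.I * n) ≠ 0 := by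
    intro h; apply hc2; rw [← neg_eq_zero, ← h]; ring
  have h2pi : ((2 : ℂ) * (π : ℂ)) ≠ 0 := by simp [Real.pi_ne_zero]
  have hstep : ∀ A B : ℂ,
      (1 / (2 * (π : ℂ))) * ((A * u - B * u) / ((a : ℂ) - Complex.I * n) / 2
          + (B * u - A * u) / (-(a : ℂ) - Complex.I * n) / 2) * u
      = (u * u) * ((A - B) * a / (2 * (π : ℂ)) / ((a : ℂ) ^ 2 + (n : ℂ) ^ 2)) := by
    intro A B
    rw [← hprod]
    field_simp
    ring
  rw [key, e1, e2, e3, e4, Complex.real_smul]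
  push_cast
  rw [hstep, huu, one_mul, Complex.sinh]
  ring

lemma coth_int (a : ℝ) (ha : 0 < a) :
    HasSum (fun n : ℤ => a / (a ^ 2 + (n : ℝ) ^ 2))
      (π * Real.cosh (a * π) / Real.sinh (a * π)) := by
  haveI : Fact (0 < 2 * π) := ⟨by positivity⟩
  have hπ : (-π) + 2 * π = π := by ring
  set F : C(AddCircle (2 * π), ℂ) :=
    ⟨fun x => AddCircle.liftIco (2 * π) (-π) (fun t : ℝ => Complex.cosh (a * t)) x,
      AddCircle.liftIco_continuous
        (by
          push_cast
          rw [show (a : ℂ) * (-(π : ℂ)) = -((a : ℂ) * (π : ℂ)) by ring, Complex.cosh_neg]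
          ring_nf)
        ((Complex.continuous_cosh.comp (continuous_const.mul Complex.continuous_ofReal)).continuousOn)⟩
    with hF
  set r : ℝ := Real.sinh (a * π) * a / π with hr
  have hcoeff : ∀ n : ℤ, fourierCoeff (⇑F) n * Complex.exp (Complex.I * n * π)
      = ((r / (a ^ 2 + (n : ℝ) ^ 2) : ℝ) : ℂ) := by
    intro n
    have h := fourier_cosh_coeff a ha n
    have h2 : ((Real.sinh (a * π) * a / π : ℝ) : ℂ) / ((a : ℂ) ^ 2 + (n : ℂ) ^ 2)
        = ((r / (a ^ 2 + (n : ℝ) ^ 2) : ℝ) : ℂ) := by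
      rw [hr]; push_cast; ring
    exact h.trans h2
  have hnorm1 : ∀ n : ℤ, ‖Complex.exp (Complex.I * n * π)‖ = 1 := by
    intro n
    rw [Complex.norm_exp]
    norm_num [Complex.mul_re, Complex.I_re, Complex.I_im]
  -- summability of the majorant
  have hs0 : Summable (fun n : ℕ => 1 / (a ^ 2 + (n : ℝ) ^ 2)) := by
    rw [← summable_nat_add_iff 1]
    have hb : Summable (fun n : ℕ => 1 / ((n : ℝ) + 1) ^ 2) := by
      have := (summable_nat_add_iff (f := fun n : ℕ => 1 / (n : ℝ) ^ 2) 1).2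
        (summable_one_div_nat_pow.2 one_lt_two)
      simpa using this
    apply Summable.of_nonneg_of_le (fun n => by positivity) _ hb
    intro n
    apply one_div_le_one_div_of_le (by positivity)
    push_cast
    nlinarith [sq_nonneg a]
  have hsZ : Summable (fun n : ℤ => 1 / (a ^ 2 + (n : ℝ) ^ 2)) := by
    refine Summable.of_nat_of_neg (hs0.congr fun n => ?_) (hs0.congr fun n => ?_) <;>
      · push_cast
        ring
  have hsum : Summable (fourierCoeff (⇑F)) := by
    apply Summable.of_norm_bounded (hsZ.mul_left |r|)
    intro n
    have h1 : ‖fourierCoeff (⇑F) n‖ = ‖fourierCoeff (⇑F) n * Complex.exp (Complex.I * n * π)‖ := by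
      rw [norm_mul, hnorm1, mul_one]
    rw [h1, hcoeff, Complex.norm_real, Real.norm_eq_abs, abs_div,
      abs_of_pos (show (0:ℝ) < a ^ 2 + (n : ℝ) ^ 2 by positivity), mul_one_div]
  have HS := has_pointwise_sum_fourier_series_of_summable hsum ((π : ℝ) : AddCircle (2 * π))
  have hfour : ∀ i : ℤ, (fourier i (((π : ℝ) : AddCircle (2 * π))) : ℂ)
      = Complex.exp (Complex.I * i * π) := by
    intro i
    rw [fourier_coe_apply]
    congr 1
    have h2 : (2 * (π : ℂ)) ≠ 0 := by simp [Real.pi_ne_zero]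
    field_simp
    push_cast
    ring
  have hFval : F (((π : ℝ) : AddCircle (2 * π))) = ((Real.cosh (a * π) : ℝ) : ℂ) := by
    have h1 : (((π : ℝ) : AddCircle (2 * π))) = (((-π : ℝ) : AddCircle (2 * π))) := by
      have h2 := AddCircle.coe_add_period (2 * π) (-π)
      rw [hπ] at h2
      exact h2
    rw [h1, hF]
    simp only [ContinuousMap.coe_mk]
    rw [AddCircle.liftIco_coe_apply (by constructor <;> [linarith; linarith [Real.pi_pos]])]
    push_cast
    rw [show (a : ℂ) * (-(π : ℂ)) = -((a : ℂ) * (π : ℂ)) by ring, Complex.cosh_neg]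
  rw [hFval] at HS
  have HS2 : HasSum (fun i : ℤ => ((r / (a ^ 2 + (i : ℝ) ^ 2) : ℝ) : ℂ))
      ((Real.cosh (a * π) : ℝ) : ℂ) := by
    refine HS.congr_fun fun i => ?_
    rw [smul_eq_mul, hfour, hcoeff]
  have HS3 : HasSum (fun i : ℤ => r / (a ^ 2 + (i : ℝ) ^ 2)) (Real.cosh (a * π)) :=
    Complex.hasSum_ofReal.mp HS2
  have hsh : Real.sinh (a * π) ≠ 0 := by
    have : 0 < Real.sinh (a * π) := Real.sinh_pos_iff.2 (by positivity)
    exact this.ne'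
  have hmul := HS3.mul_left (π / Real.sinh (a * π))
  have hfun : (fun i : ℤ => π / Real.sinh (a * π) * (r / (a ^ 2 + (i : ℝ) ^ 2)))
      = fun i : ℤ => a / (a ^ 2 + (i : ℝ) ^ 2) := by
    funext i
    have hD : a ^ 2 + (i : ℝ) ^ 2 ≠ 0 := by positivity
    rw [hr]
    field_simp
  have hval : π / Real.sinh (a * π) * Real.cosh (a * π)
      = π * Real.cosh (a * π) / Real.sinh (a * π) := by ring
  rw [hfun, hval] at hmul
  exact hmul

lemma shift1 {f : ℕ → ℝ} {S : ℝ} (hf : HasSum f S) (h0 : f 0 = 0) :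
    HasSum (fun n => f (n + 1)) S := by
  refine (hasSum_nat_add_iff 1).2 ?_
  simpa [h0] using hf

lemma coth_nat (a : ℝ) (ha : 0 < a) :
    HasSum (fun n : ℕ => 2 * a / (a ^ 2 + ((n : ℝ) + 1) ^ 2))
      (π * Real.cosh (a * π) / Real.sinh (a * π) - 1 / a) := by
  have h0 := (coth_int a ha).nat_add_neg
  have hz : a / (a ^ 2 + ((0 : ℤ) : ℝ) ^ 2) = 1 / a := by
    push_cast
    rw [show a ^ 2 + (0 : ℝ) ^ 2 = a * a by ring, div_eq_div_iff (by positivity) ha.ne']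
    ring
  rw [hz] at h0
  have h1 : HasSum (fun n : ℕ => 2 * a / (a ^ 2 + (n : ℝ) ^ 2))
      (π * Real.cosh (a * π) / Real.sinh (a * π) + 1 / a) := by
    refine h0.congr_fun fun n => ?_
    push_cast
    rw [neg_sq]
    ring
  have h2 : HasSum (fun n : ℕ => 2 * a / (a ^ 2 + ((n + 1 : ℕ) : ℝ) ^ 2))
      (π * Real.cosh (a * π) / Real.sinh (a * π) - 1 / a) := by
    refine (hasSum_nat_add_iff (f := fun n : ℕ => 2 * a / (a ^ 2 + (n : ℝ) ^ 2)) 1).2 ?_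
    have hv : π * Real.cosh (a * π) / Real.sinh (a * π) - 1 / a
        + ∑ i ∈ Finset.range 1, 2 * a / (a ^ 2 + (i : ℝ) ^ 2)
        = π * Real.cosh (a * π) / Real.sinh (a * π) + 1 / a := by
      simp only [Finset.range_one, Finset.sum_singleton, Nat.cast_zero]
      rw [show a ^ 2 + (0 : ℝ) ^ 2 = a * a by ring]
      rw [show 2 * a / (a * a) = 2 / a by
        rw [div_eq_div_iff (by positivity) ha.ne']; ring]
      ring
    rw [hv]
    exact h1
  refine h2.congr_fun fun n => ?_
  push_cast
  ring_nf

lemma hz2' : HasSum (fun n : ℕ => 1 / ((n : ℝ) + 1) ^ 2) (π ^ 2 / 6) := by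
  have h := shift1 hasSum_zeta_two (by norm_num)
  refine h.congr_fun fun n => ?_
  push_cast
  ring_nf

lemma hz4' : HasSum (fun n : ℕ => 1 / ((n : ℝ) + 1) ^ 4) (π ^ 4 / 90) := by
  have h := shift1 hasSum_zeta_four (by norm_num)
  refine h.congr_fun fun n => ?_
  push_cast
  ring_nf

lemma doubleSum : HasSum (fun p : ℕ × ℕ =>
    1 / (((p.1 : ℝ) + 1) ^ 2 * (((p.1 : ℝ) + 1) ^ 2 + ((p.2 : ℝ) + 1) ^ 2))) (π ^ 4 / 72) := by
  set P : ℕ × ℕ → ℝ := fun p => (1 / ((p.1 : ℝ) + 1) ^ 2) * (1 / ((p.2 : ℝ) + 1) ^ 2) with hPdef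
  have hPs : Summable P := by
    apply summable_mul_of_summable_norm (f := fun n : ℕ => 1 / ((n : ℝ) + 1) ^ 2)
      (g := fun n : ℕ => 1 / ((n : ℝ) + 1) ^ 2) <;>
    · refine hz2'.summable.congr fun n => ?_
      rw [Real.norm_eq_abs, _root_.abs_of_nonneg (by positivity)]
  have hPval : HasSum P (π ^ 4 / 36) := by
    have := hz2'.mul_eq hz2' hPs.hasSum
    rw [show π ^ 2 / 6 * (π ^ 2 / 6) = π ^ 4 / 36 by ring] at this
    exact this ▸ hPs.hasSum
  set F : ℕ × ℕ → ℝ := fun p =>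
    1 / (((p.1 : ℝ) + 1) ^ 2 * (((p.1 : ℝ) + 1) ^ 2 + ((p.2 : ℝ) + 1) ^ 2)) with hFdef
  have hFle : ∀ p, F p ≤ P p := by
    intro p
    rw [hFdef, hPdef]
    simp only
    rw [one_div_mul_one_div]
    apply one_div_le_one_div_of_le (by positivity)
    have h1 : (0 : ℝ) < ((p.1 : ℝ) + 1) ^ 2 := by positivity
    nlinarith [sq_nonneg ((p.2 : ℝ) + 1)]
  have hFs : Summable F := hPval.summable.of_nonneg_of_le (fun p => by positivity) hFle
  have hGs : HasSum (fun p : ℕ × ℕ => F (p.2, p.1)) (∑' p, F p) :=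
    ((Equiv.prodComm ℕ ℕ).hasSum_iff).2 hFs.hasSum
  have hadd : HasSum (fun p : ℕ × ℕ => F p + F (p.2, p.1)) (∑' p, F p + ∑' p, F p) :=
    hFs.hasSum.add hGs
  have hPP : HasSum P (∑' p, F p + ∑' p, F p) := by
    refine hadd.congr_fun fun p => ?_
    rw [hFdef, hPdef]
    simp only
    have hx : (0 : ℝ) < (p.1 : ℝ) + 1 := by positivity
    have hy : (0 : ℝ) < (p.2 : ℝ) + 1 := by positivity
    field_simp
    ring
  have h36 : ∑' p, F p + ∑' p, F p = π ^ 4 / 36 := hPP.unique hPval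
  have hval : ∑' p, F p = π ^ 4 / 72 := by linarith
  exact hval ▸ hFs.hasSum

lemma coth_exp {x : ℝ} (hx : 0 < x) :
    Real.cosh x / Real.sinh x = 1 + 2 / (Real.exp (2 * x) - 1) := by
  have h1 : 1 < Real.exp (2 * x) := Real.one_lt_exp_iff.2 (by positivity)
  have he : Real.exp (2 * x) - 1 ≠ 0 := by linarith
  have h2 : 1 < Real.exp x := Real.one_lt_exp_iff.2 hx
  have hs : Real.exp x - (Real.exp x)⁻¹ ≠ 0 := by
    have : (Real.exp x)⁻¹ < 1 := inv_lt_one_of_one_lt₀ h2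
    intro h; linarith [sub_eq_zero.1 h]
  have hee : Real.exp x * Real.exp x - 1 ≠ 0 := by nlinarith
  have hee2 : Real.exp x ^ 2 - 1 ≠ 0 := by nlinarith
  rw [Real.cosh_eq, Real.sinh_eq, Real.exp_neg, two_mul, Real.exp_add]
  field_simp
  ring

/-- Ramanujan's formula: `ζ(3) = (7/180)π³ − 2 ∑_{n ≥ 1} 1/(n³(e^{2πn} − 1))`. -/
theorem ramanujan_zeta_three :
    ∑' n : ℕ, (1 : ℝ) / ((n : ℝ) + 1) ^ 3
    = (7 / 180) * Real.pi ^ 3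
      - 2 * ∑' n : ℕ, (1 : ℝ) /
          (((n : ℝ) + 1) ^ 3 * (Real.exp (2 * ((n : ℝ) + 1) * Real.pi) - 1)) := by
  have hfib : ∀ m : ℕ, HasSum (fun n : ℕ =>
      1 / (((m : ℝ) + 1) ^ 2 * (((m : ℝ) + 1) ^ 2 + ((n : ℝ) + 1) ^ 2)))
      ((π * Real.cosh (((m : ℝ) + 1) * π) / Real.sinh (((m : ℝ) + 1) * π) - 1 / ((m : ℝ) + 1))
        * (1 / (2 * ((m : ℝ) + 1) ^ 3))) := by
    intro m
    have ha : (0 : ℝ) < (m : ℝ) + 1 := by positivity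
    have h := (coth_nat ((m : ℝ) + 1) ha).mul_right (1 / (2 * ((m : ℝ) + 1) ^ 3))
    refine h.congr_fun fun n => ?_
    have hD : ((m : ℝ) + 1) ^ 2 + ((n : ℝ) + 1) ^ 2 ≠ 0 := by positivity
    field_simp
  have hg := doubleSum.prod_fiberwise hfib
  have hsum1 := hg.add (hz4'.mul_right (1 / 2))
  have hcs : HasSum (fun m : ℕ =>
      π * (Real.cosh (((m : ℝ) + 1) * π) / Real.sinh (((m : ℝ) + 1) * π))
        * (1 / (2 * ((m : ℝ) + 1) ^ 3))) (π ^ 4 / 72 + π ^ 4 / 90 * (1 / 2)) := by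
    refine hsum1.congr_fun fun m => ?_
    have ha : (0 : ℝ) < (m : ℝ) + 1 := by positivity
    have hs : Real.sinh (((m : ℝ) + 1) * π) ≠ 0 :=
      (Real.sinh_pos_iff.2 (by positivity)).ne'
    field_simp
    ring
  have hmul := hcs.mul_left (2 / π)
  have hcoth3 : HasSum (fun m : ℕ =>
      (1 + 2 / (Real.exp (2 * ((m : ℝ) + 1) * π) - 1)) / ((m : ℝ) + 1) ^ 3)
      (7 / 180 * π ^ 3) := by
    have hval : 2 / π * (π ^ 4 / 72 + π ^ 4 / 90 * (1 / 2)) = 7 / 180 * π ^ 3 := by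
      field_simp [Real.pi_ne_zero]
      ring
    rw [hval] at hmul
    refine hmul.congr_fun fun m => ?_
    have ha : (0 : ℝ) < (m : ℝ) + 1 := by positivity
    have hx : (0 : ℝ) < ((m : ℝ) + 1) * π := by positivity
    have hc := coth_exp hx
    rw [show 2 * ((m : ℝ) + 1) * π = 2 * (((m : ℝ) + 1) * π) by ring, ← hc]
    field_simp [Real.pi_ne_zero]
  have hA : Summable (fun m : ℕ => (1 : ℝ) / ((m : ℝ) + 1) ^ 3) := by
    have := (summable_nat_add_iff (f := fun n : ℕ => 1 / (n : ℝ) ^ 3) 1).2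
      (summable_one_div_nat_pow.2 (by norm_num))
    refine this.congr fun n => ?_
    push_cast
    ring_nf
  set b : ℕ → ℝ := fun n : ℕ => (1 : ℝ) /
      (((n : ℝ) + 1) ^ 3 * (Real.exp (2 * ((n : ℝ) + 1) * Real.pi) - 1)) with hb
  have hsplit : ∀ m : ℕ, (1 + 2 / (Real.exp (2 * ((m : ℝ) + 1) * π) - 1)) / ((m : ℝ) + 1) ^ 3
      = (1 : ℝ) / ((m : ℝ) + 1) ^ 3 + 2 * b m := by
    intro m
    have ha : (0 : ℝ) < (m : ℝ) + 1 := by positivity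
    have h1 : 1 < Real.exp (2 * ((m : ℝ) + 1) * π) := Real.one_lt_exp_iff.2 (by positivity)
    have he : Real.exp (2 * ((m : ℝ) + 1) * π) - 1 ≠ 0 := by linarith
    rw [hb]
    simp only
    rw [add_div, div_div, mul_one_div]
    ring_nf
  have htot : HasSum (fun m : ℕ => (1 : ℝ) / ((m : ℝ) + 1) ^ 3 + 2 * b m) (7 / 180 * π ^ 3) :=
    hcoth3.congr_fun fun m => (hsplit m).symm
  have hBsum : Summable (fun m : ℕ => 2 * b m) := by
    have h2 := htot.summable.sub hA
    refine h2.congr fun m => ?_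
    simp
  have h1 := htot.tsum_eq
  rw [Summable.tsum_add hA hBsum, tsum_mul_left] at h1
  linarith

end
end

section
/- The number of Lyndon words of length n over a 2-letter alphabet equals (1/n) ∑_{d | n} μ(n/d) 2^d, where μ is the Möbius function. -/
set_option linter.unusedSectionVars false

/-- A Lyndon word over a totally ordered alphabet: a nonempty word strictly
smaller in lexicographic order than all of its proper nonempty suffixes. -/
def IsLyndon {α : Type*} [LT α] (w : List α) : Prop :=
  w ≠ [] ∧ ∀ u v : List α, w = u ++ v → u ≠ [] → v ≠ [] → List.Lex (· < ·) w v

namespace LyndonAux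
open List
variable {α : Type*} [LinearOrder α]

def pw (u : List α) : ℕ → List α
  | 0 => []
  | k + 1 => u ++ pw u k

@[simp] lemma length_pw (u : List α) (k : ℕ) : (pw u k).length = k * u.length := by
  induction k with
  | zero => simp [pw]
  | succ k ih => simp [pw, ih, Nat.succ_mul, Nat.add_comm]

lemma pw_comm (x y : List α) (k : ℕ) : pw (x ++ y) k ++ x = x ++ pw (y ++ x) k := by
  induction k with
  | zero => simp [pw]
  | succ k ih => simp only [pw, append_assoc, ih]

lemma pw_append (u : List α) (k : ℕ) : pw u k ++ u = u ++ pw u k := by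
  have := pw_comm u [] k
  simpa using this

lemma take_pw (u : List α) (k : ℕ) (hk : 0 < k) : (pw u k).take u.length = u := by
  obtain ⟨k, rfl⟩ := Nat.exists_eq_succ_of_ne_zero hk.ne'
  simp [pw, take_left]

lemma rotate_pw_length (u : List α) (k : ℕ) : (pw u k).rotate u.length = pw u k := by
  cases k with
  | zero => simp [pw]
  | succ k =>
    rw [rotate_eq_drop_append_take (by simp [Nat.succ_mul])]
    simp [pw, drop_left, take_left, pw_append]

lemma rotate_pw_mul (u : List α) (k q : ℕ) : (pw u k).rotate (u.length * q) = pw u k := by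
  induction q with
  | zero => simp
  | succ q ih => rw [Nat.mul_succ, ← rotate_rotate, ih, rotate_pw_length]

lemma rotate_pw (u : List α) (k i : ℕ) (hi : i ≤ u.length) :
    (pw u k).rotate i = pw (u.rotate i) k := by
  cases k with
  | zero => simp [pw]
  | succ k =>
    have hu : u = u.take i ++ u.drop i := (take_append_drop i u).symm
    have hlt : u.rotate i = u.drop i ++ u.take i := rotate_eq_drop_append_take hi
    have hti : (u.take i).length = i := by simp [hi]
    rw [rotate_eq_drop_append_take (by simp [Nat.succ_mul]; omega)]
    have hdrop : (pw u (k+1)).drop i = u.drop i ++ pw u k := by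
      show (u ++ pw u k).drop i = _
      rw [drop_append_of_le_length hi]
    have htake : (pw u (k+1)).take i = u.take i := by
      show (u ++ pw u k).take i = _
      rw [take_append_of_le_length hi]
    rw [hdrop, htake, hlt]
    have := pw_comm (u.drop i) (u.take i) k
    rw [show pw u k = pw (u.take i ++ u.drop i) k by rw [← hu]] at *
    calc u.drop i ++ pw (u.take i ++ u.drop i) k ++ u.take i
        = u.drop i ++ (pw (u.take i ++ u.drop i) k ++ u.take i) := by rw [append_assoc]
      _ = u.drop i ++ (u.take i ++ pw (u.drop i ++ u.take i) k) := by rw [pw_comm]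
      _ = (u.drop i ++ u.take i) ++ pw (u.drop i ++ u.take i) k := by rw [append_assoc]
      _ = pw (u.drop i ++ u.take i) (k+1) := rfl


lemma eq_pw_of_rotate_eq (d : ℕ) : ∀ (m : ℕ) (w : List α), w.length = m * d →
    w.rotate d = w → w = pw (w.take d) m := by
  intro m
  induction m with
  | zero =>
    intro w h _
    simp only [Nat.zero_mul, length_eq_zero_iff] at h
    simp [h, pw]
  | succ m ih =>
    intro w hlen hrot
    have hd : d ≤ w.length := by rw [hlen, Nat.succ_mul]; omega
    set s := w.take d with hs
    set t := w.drop d with ht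
    have hw : s ++ t = w := take_append_drop d w
    have hslen : s.length = d := by simp [hs, hd]
    have htlen : t.length = m * d := by simp [ht, hlen, Nat.succ_mul]
    have hts : t ++ s = s ++ t := by
      rw [hw]
      rw [rotate_eq_drop_append_take hd] at hrot
      exact hrot
    rcases Nat.eq_zero_or_pos m with hm | hm
    · have : t = [] := by rw [← length_eq_zero_iff, htlen, hm, Nat.zero_mul]
      rw [this, append_nil] at hw
      rw [← hw, hm]
      simp [pw]
    · have hdt : d ≤ t.length := by rw [htlen]; exact Nat.le_mul_of_pos_left d hm
      have htake : t.take d = s := by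
        have h1 : (t ++ s).take d = t.take d := take_append_of_le_length hdt
        have h2 : (s ++ t).take d = s := take_left' hslen
        rw [hts, h2] at h1; exact h1.symm
      have hrt : t.rotate d = t := by
        rw [rotate_eq_drop_append_take hdt]
        have h1 : (t ++ s).drop d = t.drop d ++ s := drop_append_of_le_length hdt
        have h2 : (s ++ t).drop d = t := drop_left' hslen
        rw [hts, h2] at h1
        rw [htake, ← h1]
      have := ih t htlen hrt
      rw [htake] at this
      calc w = s ++ t := hw.symm
        _ = s ++ pw s m := by rw [← this]
        _ = pw s (m + 1) := rfl

lemma lex_append {x y : List α} (s t : List α) (hlen : x.length = y.length)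
    (h : List.Lex (· < ·) x y) : List.Lex (· < ·) (x ++ s) (y ++ t) := by
  induction x generalizing y with
  | nil =>
    have : y = [] := by simpa using hlen.symm
    subst this; exact absurd h (by rintro ⟨⟩)
  | cons a x ih =>
    cases y with
    | nil => simp at hlen
    | cons b y =>
      cases h with
      | rel hab => exact List.Lex.rel hab
      | cons h' => exact List.Lex.cons (ih (by simpa using hlen) h')

lemma lex_cancel_left (s : List α) {x y : List α} (h : List.Lex (· < ·) (s ++ x) (s ++ y)) :
    List.Lex (· < ·) x y := by
  induction s with
  | nil => exact h
  | cons a s ih =>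
    cases h with
    | rel hab => exact absurd hab (lt_irrefl a)
    | cons h' => exact ih h'

lemma lex_append_right_of_le {x y : List α} (t : List α) (h : List.Lex (· < ·) x y)
    (hlen : y.length ≤ x.length) : List.Lex (· < ·) x (y ++ t) := by
  induction x generalizing y with
  | nil => cases h; simp_all
  | cons a x ih =>
    cases y with
    | nil => cases h
    | cons b y =>
      cases h with
      | rel hab => exact List.Lex.rel hab
      | cons h' => exact List.Lex.cons (ih h' (by simpa using hlen))

lemma lex_of_lex_append {x y : List α} (t : List α) (h : List.Lex (· < ·) x (y ++ t))
    (hp : ¬ y <+: x) : List.Lex (· < ·) x y := by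
  induction x generalizing y with
  | nil =>
    cases y with
    | nil => exact absurd nil_prefix hp
    | cons b y => exact List.Lex.nil
  | cons a x ih =>
    cases y with
    | nil => exact absurd nil_prefix hp
    | cons b y =>
      cases h with
      | rel hab => exact List.Lex.rel hab
      | cons h' =>
        exact List.Lex.cons (ih h' (fun hpre => hp (List.cons_prefix_cons.mpr ⟨rfl, hpre⟩)))

lemma pw_lex {x y : List α} (k : ℕ) (hk : 0 < k) (hlen : x.length = y.length)
    (h : List.Lex (· < ·) x y) : List.Lex (· < ·) (pw x k) (pw y k) := by
  obtain ⟨k, rfl⟩ := Nat.exists_eq_succ_of_ne_zero hk.ne'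
  exact lex_append _ _ hlen h

/-- A Lyndon word is strictly smaller than all its proper rotations. -/
lemma lyndon_lex_rotate {w : List α} (hw : IsLyndon w) {i : ℕ} (h0 : 0 < i)
    (h1 : i < w.length) : List.Lex (· < ·) w (w.rotate i) := by
  have hi : i ≤ w.length := h1.le
  rw [rotate_eq_drop_append_take hi]
  have hW : w = w.take i ++ w.drop i := (take_append_drop i w).symm
  have h2 : List.Lex (· < ·) w (w.drop i) := by
    refine hw.2 _ _ hW ?_ ?_
    · intro h; apply_fun List.length at h; simp [hi] at h; omega
    · intro h; apply_fun List.length at h; simp at h; omega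
  exact lex_append_right_of_le _ h2 (by simp)

/-- Conversely, a word strictly smaller than all its proper rotations is Lyndon. -/
lemma lyndon_of_lex_rotate {w : List α} (hw : w ≠ [])
    (h : ∀ i, 0 < i → i < w.length → List.Lex (· < ·) w (w.rotate i)) : IsLyndon w := by
  refine ⟨hw, ?_⟩
  rintro u v rfl hu hv
  have hul : 0 < u.length := length_pos_iff.mpr hu
  have hvl : 0 < v.length := length_pos_iff.mpr hv
  have hlen : (u ++ v).length = u.length + v.length := length_append
  have h1 : List.Lex (· < ·) (u ++ v) (v ++ u) := by
    have := h u.length hul (by omega)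
    rwa [rotate_eq_drop_append_take (by omega), drop_left, take_left] at this
  by_cases hp : v <+: u ++ v
  · obtain ⟨tt, htt⟩ := hp
    exfalso
    have httlen : tt.length = u.length := by
      apply_fun List.length at htt; simp at htt; omega
    have h2 : List.Lex (· < ·) tt u := by
      apply lex_cancel_left v
      rw [htt]; exact h1
    have h3 : List.Lex (· < ·) (tt ++ v) (u ++ v) := lex_append _ _ httlen h2
    have h4 : List.Lex (· < ·) (u ++ v) (tt ++ v) := by
      have := h v.length hvl (by omega)
      rw [rotate_eq_drop_append_take (by omega), ← htt,
        drop_left' (by simp), take_left' (by simp)] at this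
      rwa [htt] at this
    exact absurd h3 (asymm h4)
  · exact lex_of_lex_append _ h1 hp

end LyndonAux

namespace LyndonAux

lemma rotate_mul_of_rotate_eq {α : Type*} {w : List α} {d : ℕ} (h : w.rotate d = w) (q : ℕ) :
    w.rotate (d * q) = w := by
  induction q with
  | zero => simp
  | succ q ih => rw [Nat.mul_succ, ← List.rotate_rotate, ih, h]

lemma rotate_pw_mod (u : List (Fin 2)) (k j : ℕ) (hd : 0 < u.length) :
    (pw u k).rotate j = pw (u.rotate (j % u.length)) k := by
  conv_lhs => rw [← Nat.div_add_mod j u.length, ← List.rotate_rotate, rotate_pw_mul]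
  exact rotate_pw u k _ (Nat.mod_lt _ hd).le

lemma lex_pw_rotate {u : List (Fin 2)} (hu : IsLyndon u) {k : ℕ} (hk : 0 < k) {j : ℕ}
    (hj : ¬ u.length ∣ j) : List.Lex (· < ·) (pw u k) ((pw u k).rotate j) := by
  have hd : 0 < u.length := List.length_pos_iff.mpr hu.1
  rw [rotate_pw_mod u k j hd]
  have hr0 : 0 < j % u.length := Nat.pos_of_ne_zero (fun h => hj (Nat.dvd_of_mod_eq_zero h))
  have hrd : j % u.length < u.length := Nat.mod_lt _ hd
  exact pw_lex k hk (by simp) (lyndon_lex_rotate hu hr0 hrd)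

lemma rotate_pw_eq_iff {u : List (Fin 2)} (hu : IsLyndon u) {k : ℕ} (hk : 0 < k) (j : ℕ) :
    (pw u k).rotate j = pw u k ↔ u.length ∣ j := by
  constructor
  · intro h
    by_contra hj
    have := lex_pw_rotate hu hk hj
    rw [h] at this
    exact absurd this (asymm this)
  · rintro ⟨q, rfl⟩
    exact rotate_pw_mul u k q

noncomputable def allW (n : ℕ) : Finset (List (Fin 2)) :=
  (Finset.univ : Finset (List.Vector (Fin 2) n)).map ⟨List.Vector.toList, List.Vector.toList_injective⟩

lemma mem_allW {n : ℕ} {w : List (Fin 2)} : w ∈ allW n ↔ w.length = n := by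
  simp only [allW, Finset.mem_map, Finset.mem_univ, true_and, Function.Embedding.coeFn_mk]
  constructor
  · rintro ⟨⟨l, hl⟩, rfl⟩; exact hl
  · intro h; exact ⟨⟨w, h⟩, rfl⟩

lemma card_allW (n : ℕ) : (allW n).card = 2 ^ n := by
  rw [allW, Finset.card_map, Finset.card_univ, card_vector]
  simp

noncomputable def lynd (n : ℕ) : Finset (List (Fin 2)) :=
  @Finset.filter _ (fun w => IsLyndon w) (Classical.decPred _) (allW n)

lemma mem_lynd {n : ℕ} {w : List (Fin 2)} : w ∈ lynd n ↔ w.length = n ∧ IsLyndon w := by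
  classical
  rw [lynd]
  rw [Finset.mem_filter, mem_allW]

lemma key (m : ℕ) (hm : 0 < m) :
    ∑ d ∈ m.divisors, d * (lynd d).card = 2 ^ m := by
  rw [← card_allW m]
  have hcard : (m.divisors.sigma (fun d => (lynd d) ×ˢ Finset.range d)).card
      = ∑ d ∈ m.divisors, d * (lynd d).card := by
    rw [Finset.card_sigma]
    refine Finset.sum_congr rfl fun d _ => ?_
    rw [Finset.card_product, Finset.card_range, Nat.mul_comm]
  rw [← hcard]
  refine Finset.card_bij (fun p _ => (pw p.2.1 (m / p.1)).rotate p.2.2) ?_ ?_ ?_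
  · rintro ⟨d, u, r⟩ hp
    simp only [Finset.mem_sigma, Finset.mem_product, Finset.mem_range, Nat.mem_divisors] at hp
    obtain ⟨⟨hdm, -⟩, hu, hr⟩ := hp
    obtain ⟨hulen, -⟩ := mem_lynd.mp hu
    rw [mem_allW, List.length_rotate, length_pw, hulen, Nat.div_mul_cancel hdm]
  · rintro ⟨d, u, r⟩ hp ⟨d', u', r'⟩ hp' heq
    simp only [Finset.mem_sigma, Finset.mem_product, Finset.mem_range, Nat.mem_divisors] at hp hp'
    obtain ⟨⟨hdm, -⟩, hu, hr⟩ := hp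
    obtain ⟨⟨hdm', -⟩, hu', hr'⟩ := hp'
    obtain ⟨hulen, hlyn⟩ := mem_lynd.mp hu
    obtain ⟨hulen', hlyn'⟩ := mem_lynd.mp hu'
    have hd0 : 0 < d := Nat.pos_of_dvd_of_pos hdm hm
    have hd0' : 0 < d' := Nat.pos_of_dvd_of_pos hdm' hm
    have hk : 0 < m / d := Nat.div_pos (Nat.le_of_dvd hm hdm) hd0
    have hk' : 0 < m / d' := Nat.div_pos (Nat.le_of_dvd hm hdm') hd0'
    replace heq : (pw u (m / d)).rotate r = (pw u' (m / d')).rotate r' := heq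
    set v := pw u (m / d) with hv
    set v' := pw u' (m / d') with hv'
    have hvlen : v.length = m := by
      rw [hv, length_pw, hulen, Nat.div_mul_cancel hdm]
    have hvlen' : v'.length = m := by
      rw [hv', length_pw, hulen', Nat.div_mul_cancel hdm']
    have hfix : ∀ j, v.rotate j = v ↔ d ∣ j := by
      intro j; have := rotate_pw_eq_iff hlyn hk j; rwa [hulen] at this
    have hfix' : ∀ j, v'.rotate j = v' ↔ d' ∣ j := by
      intro j; have := rotate_pw_eq_iff hlyn' hk' j; rwa [hulen'] at this
    have hlex : ∀ j, ¬ d ∣ j → List.Lex (· < ·) v (v.rotate j) := by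
      intro j hj; rw [← hulen] at hj; exact lex_pw_rotate hlyn hk hj
    have hlex' : ∀ j, ¬ d' ∣ j → List.Lex (· < ·) v' (v'.rotate j) := by
      intro j hj; rw [← hulen'] at hj; exact lex_pw_rotate hlyn' hk' hj
    -- v' is a rotation of v and vice versa
    have hrot1 : v' = v.rotate (r + (m - r')) := by
      have h1 : (v'.rotate r').rotate (m - r') = v' := by
        rw [List.rotate_rotate, Nat.add_sub_cancel' (le_of_lt (lt_of_lt_of_le hr' (Nat.le_of_dvd hm hdm'))),
          ← hvlen', List.rotate_length]
      rw [← h1, ← heq, List.rotate_rotate]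
    have hrot2 : v = v'.rotate (r' + (m - r)) := by
      have h1 : (v.rotate r).rotate (m - r) = v := by
        rw [List.rotate_rotate, Nat.add_sub_cancel' (le_of_lt (lt_of_lt_of_le hr (Nat.le_of_dvd hm hdm))),
          ← hvlen, List.rotate_length]
      rw [← h1, heq, List.rotate_rotate]
    have hvv : v = v' := by
      by_contra hne
      have h1 : List.Lex (· < ·) v v' := by
        rw [hrot1]
        apply hlex
        intro hdvd2
        exact hne (hrot1.trans ((hfix _).mpr hdvd2)).symm
      have h2 : List.Lex (· < ·) v' v := by
        rw [hrot2]
        apply hlex'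
        intro hdvd2
        exact hne (hrot2.trans ((hfix' _).mpr hdvd2))
      exact absurd h1 (asymm h2)
    have hdd : d = d' := by
      apply Nat.dvd_antisymm
      · exact (hfix d').mp (by rw [hvv, (hfix' d').mpr dvd_rfl])
      · exact (hfix' d).mp (by rw [← hvv, (hfix d).mpr dvd_rfl])
    have huu : u = u' := by
      have h1 : v.take d = u := by
        have := take_pw u (m / d) hk; rwa [hulen] at this
      have h2 : v'.take d' = u' := by
        have := take_pw u' (m / d') hk'; rwa [hulen'] at this
      rw [← h1, ← h2, hvv, hdd]
    have hrr : r = r' := by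
      have heq2 : v.rotate r = v.rotate r' := by rw [heq, hvv]
      have hdlem2 : d ≤ m := Nat.le_of_dvd hm hdm
      have key2 : ∀ a b : ℕ, a ≤ b → b < d → v.rotate a = v.rotate b → a = b := by
        intro a b hab hbd habe
        have h1 : v.rotate (b - a) = v := by
          have h0 := congrArg (fun x => List.rotate x (m - a)) habe
          simp only [List.rotate_rotate] at h0
          rw [show a + (m - a) = m by omega, ← hvlen, List.rotate_length] at h0
          rw [hvlen, show b + (m - a) = (b - a) + m by omega, ← List.rotate_rotate,
            show m = (v.rotate (b - a)).length from by rw [List.length_rotate, hvlen],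
            List.rotate_length] at h0
          exact h0.symm
        have hdvd2 := (hfix _).mp h1
        rcases Nat.eq_zero_or_pos (b - a) with h0 | h0
        · omega
        · have := Nat.le_of_dvd h0 hdvd2; omega
      rcases le_total r r' with h | h
      · exact key2 r r' h (hdd ▸ hr') heq2
      · exact (key2 r' r h hr heq2.symm).symm
    subst hdd
    simp [huu, hrr]
  · intro w hw
    have hwlen : w.length = m := mem_allW.mp hw
    have hRne : ((Finset.range m).image w.rotate).Nonempty :=
      ⟨w.rotate 0, Finset.mem_image.mpr ⟨0, Finset.mem_range.mpr hm, rfl⟩⟩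
    obtain ⟨i₀, hi₀m, hi₀⟩ :=
      Finset.mem_image.mp (((Finset.range m).image w.rotate).min'_mem hRne)
    rw [Finset.mem_range] at hi₀m
    set v := ((Finset.range m).image w.rotate).min' hRne with hvdef
    have hvlen : v.length = m := by rw [← hi₀, List.length_rotate, hwlen]
    have hrotmem : ∀ j, v.rotate j ∈ (Finset.range m).image w.rotate := by
      intro j
      rw [← hi₀, List.rotate_rotate]
      refine Finset.mem_image.mpr ⟨(i₀ + j) % m, Finset.mem_range.mpr (Nat.mod_lt _ hm), ?_⟩
      rw [← hwlen]; exact List.rotate_mod w (i₀ + j)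
    have hlv : ∀ j, v.rotate j ≠ v → List.Lex (· < ·) v (v.rotate j) := by
      intro j hne
      have hle : v ≤ v.rotate j := Finset.min'_le _ _ (hrotmem j)
      exact lt_of_le_of_ne hle (Ne.symm hne)
    have hex : ∃ j, 0 < j ∧ v.rotate j = v :=
      ⟨m, hm, by rw [← hvlen, List.rotate_length]⟩
    set d := Nat.find hex with hddef
    obtain ⟨hd0, hdrot⟩ := Nat.find_spec hex
    have hdmin : ∀ j, 0 < j → j < d → v.rotate j ≠ v := by
      intro j hj0 hjd hje
      exact Nat.find_min hex hjd ⟨hj0, hje⟩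
    have hdvd : ∀ j, v.rotate j = v → d ∣ j := by
      intro j hj
      have h1 : v.rotate (d * (j / d)) = v := rotate_mul_of_rotate_eq hdrot _
      have h2 : v.rotate (j % d) = v := by
        conv at hj => rw [← Nat.div_add_mod j d, ← List.rotate_rotate, h1]
        exact hj
      rcases Nat.eq_zero_or_pos (j % d) with h | h
      · exact Nat.dvd_of_mod_eq_zero h
      · exact absurd h2 (hdmin _ h (Nat.mod_lt _ hd0))
    have hdm : d ∣ m := hdvd m (by rw [← hvlen, List.rotate_length])
    have hdlem : d ≤ m := Nat.le_of_dvd hm hdm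
    have hk : 0 < m / d := Nat.div_pos hdlem hd0
    have hv_pw : v = pw (v.take d) (m / d) :=
      eq_pw_of_rotate_eq d (m / d) v (by rw [hvlen, Nat.div_mul_cancel hdm]) hdrot
    obtain ⟨u, hu⟩ : ∃ u, v.take d = u := ⟨_, rfl⟩
    rw [hu] at hv_pw
    have hulen : u.length = d := by rw [← hu, List.length_take, hvlen]; omega
    have hu_lyndon : IsLyndon u := by
      apply lyndon_of_lex_rotate
      · intro h; rw [← List.length_eq_zero_iff] at h; omega
      · intro i hi0 hid
        rw [hulen] at hid
        have hvne : v.rotate i ≠ v := hdmin i hi0 hid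
        have hune : u.rotate i ≠ u := by
          intro h
          apply hvne
          rw [hv_pw, rotate_pw _ _ _ (by omega), h]
        rcases lt_trichotomy u (u.rotate i) with h | h | h
        · exact h
        · exact absurd h.symm hune
        · exfalso
          have h1 : List.Lex (· < ·) (v.rotate i) v := by
            rw [hv_pw, rotate_pw _ _ _ (by omega)]
            exact pw_lex _ hk (by simp) h
          exact absurd h1 (asymm (hlv i hvne))
    refine ⟨⟨d, u, (m - i₀) % d⟩, ?_, ?_⟩
    · simp only [Finset.mem_sigma, Finset.mem_product, Finset.mem_range, Nat.mem_divisors]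
      exact ⟨⟨hdm, hm.ne'⟩, mem_lynd.mpr ⟨hulen, hu_lyndon⟩, Nat.mod_lt _ hd0⟩
    · have hwv : w = v.rotate (m - i₀) := by
        rw [← hi₀, List.rotate_rotate, Nat.add_sub_cancel' hi₀m.le, ← hwlen, List.rotate_length]
      have h1 : v.rotate (m - i₀) = v.rotate ((m - i₀) % d) := by
        conv_lhs => rw [← Nat.div_add_mod (m - i₀) d, ← List.rotate_rotate,
          rotate_mul_of_rotate_eq hdrot]
      rw [hwv, h1, hv_pw]

end LyndonAux

/-- The number of Lyndon words of length `n` over a 2-letter alphabet equals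
`(1/n) ∑_{d ∣ n} μ(n/d) 2^d`, where `μ` is the Möbius function. -/
theorem lyndon_count_two_letters (n : ℕ) (hn : 0 < n) :
    (Set.ncard {w : List (Fin 2) | w.length = n ∧ IsLyndon w} : ℚ)
    = (1 / (n : ℚ)) *
        ∑ d ∈ n.divisors, ((ArithmeticFunction.moebius (n / d) : ℤ) : ℚ) * 2 ^ d := by
  classical
  have hset : {w : List (Fin 2) | w.length = n ∧ IsLyndon w} = ↑(LyndonAux.lynd n) := by
    ext w
    simp [LyndonAux.mem_lynd]
  rw [hset, Set.ncard_coe_finset]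
  have h1 : ∀ m : ℕ, 0 < m → ∑ i ∈ m.divisors, ((i : ℕ) : ℚ) * ((LyndonAux.lynd i).card : ℚ) = (2 : ℚ) ^ m := by
    intro m hm
    have h0 := congrArg (Nat.cast : ℕ → ℚ) (LyndonAux.key m hm)
    push_cast at h0
    exact h0
  have h2 := (ArithmeticFunction.sum_eq_iff_sum_smul_moebius_eq
    (f := fun i : ℕ => ((i : ℚ) * ((LyndonAux.lynd i).card : ℚ)))
    (g := fun m : ℕ => (2 : ℚ) ^ m)).mp (fun m hm => h1 m hm) n hn
  have h3 : ∑ x ∈ n.divisorsAntidiagonal,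
      (ArithmeticFunction.moebius x.fst) • ((2 : ℚ) ^ x.snd)
      = ∑ d ∈ n.divisors, ((ArithmeticFunction.moebius (n / d) : ℤ) : ℚ) * 2 ^ d := by
    rw [← Nat.sum_divisorsAntidiagonal' (f := fun a b => ((ArithmeticFunction.moebius a : ℤ) : ℚ) * 2 ^ b)]
    refine Finset.sum_congr rfl fun x _ => ?_
    rw [zsmul_eq_mul]
  rw [h3] at h2
  have hn' : (n : ℚ) ≠ 0 := Nat.cast_ne_zero.mpr hn.ne'
  rw [h2]
  field_simp
end
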